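/- arXiv:1801.02496 — 7 statements merged into one kernel-verified Lean document; each statement's English description precedes it below -/
import Mathlib

section
/- Let Y be a random variable taking values y₁,...,y_k with probabilities p₁ ≥ p₂ ≥ ... ≥ p_k > 0 summing to 1, and assign to y_i a binary codeword length ℓ(y_i) = ⌊log₂ i⌋ (the length of the i-th shortest binary string including the empty string). Then for every t > 0, (1/t)·log₂ E[2^{t·ℓ(Y)}] ≤ ((1+t)/t)·log₂ ∑_{j=1}^k p_j^{1/(1+t)}, i.e., the normalized cumulant generating function of codeword lengths is at most the Rényi entropy of Y of order 1/(1+t). -/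
open Real Finset

/-- Let `Y` take values `y₁,...,y_k` with probabilities
`p 0 ≥ p 1 ≥ ... ≥ p (k-1) > 0` summing to 1, and let the codeword of the `i`-th
value be the `i`-th shortest binary string, of length `⌊log₂ i⌋` (here
`Nat.log 2 (i+1)` for the 0-based index `i`). Then for every `t > 0`,
`(1/t)·log₂ E[2^{t·ℓ(Y)}] ≤ ((1+t)/t)·log₂ ∑ j, p j^(1/(1+t))`,
i.e. the normalized cumulant generating function of codeword lengths is at most
the Rényi entropy of order `1/(1+t)`. -/
theorem cgf_le_renyi_entropy {k : ℕ} (p : Fin k → ℝ)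
    (hpos : ∀ i, 0 < p i) (hmono : ∀ i j : Fin k, i ≤ j → p j ≤ p i)
    (hsum : ∑ i, p i = 1) (t : ℝ) (ht : 0 < t) :
    (1 / t) * Real.logb 2 (∑ i, p i * (2 : ℝ) ^ (t * (Nat.log 2 ((i : ℕ) + 1) : ℝ)))
      ≤ ((1 + t) / t) * Real.logb 2 (∑ j, p j ^ (1 / (1 + t))) := by
  have h1t : (0:ℝ) < 1 + t := by linarith
  set α : ℝ := 1 / (1 + t) with hα
  have hα0 : 0 < α := by positivity
  have hαt : α * (1 + t) = 1 := by rw [hα]; field_simp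
  set S : ℝ := ∑ j, p j ^ α with hS
  have hk : 0 < k := by
    rcases Nat.eq_zero_or_pos k with h | h
    · subst h
      rw [Finset.univ_eq_empty, Finset.sum_empty] at hsum
      norm_num at hsum
    · exact h
  have hS0 : 0 < S :=
    Finset.sum_pos (fun j _ => Real.rpow_pos_of_pos (hpos j) α)
      ⟨⟨0, hk⟩, Finset.mem_univ _⟩
  have hB : ∀ i : Fin k, ((i:ℕ) + 1 : ℝ) * p i ^ α ≤ S := by
    intro i
    have hcard : (Finset.Iic i).card = (i:ℕ) + 1 := by simp
    calc ((i:ℕ)+1 : ℝ) * p i ^ α = ∑ _j ∈ Finset.Iic i, p i ^ α := by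
          rw [Finset.sum_const, hcard]; ring
      _ ≤ ∑ j ∈ Finset.Iic i, p j ^ α :=
          Finset.sum_le_sum fun j hj =>
            Real.rpow_le_rpow (hpos i).le (hmono j i (Finset.mem_Iic.mp hj)) hα0.le
      _ ≤ S := Finset.sum_le_sum_of_subset_of_nonneg (Finset.subset_univ _)
            (fun j _ _ => (Real.rpow_pos_of_pos (hpos j) α).le)
  have hpt : ∀ i : Fin k, p i * (2:ℝ) ^ (t * (Nat.log 2 ((i:ℕ) + 1) : ℝ)) ≤ S ^ t * p i ^ α := by
    intro i
    have hL : ((2:ℝ) ^ (Nat.log 2 ((i:ℕ)+1)) : ℝ) ≤ ((i:ℕ) + 1 : ℝ) := by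
      exact_mod_cast Nat.pow_log_le_self 2 (Nat.succ_ne_zero (i:ℕ))
    have h2 : (2:ℝ) ^ (t * (Nat.log 2 ((i:ℕ) + 1) : ℝ)) ≤ ((i:ℕ)+1 : ℝ) ^ t := by
      rw [mul_comm, Real.rpow_mul (by norm_num : (0:ℝ) ≤ 2), Real.rpow_natCast]
      exact Real.rpow_le_rpow (by positivity) hL ht.le
    have hi1 : ((i:ℕ)+1 : ℝ) ≤ S * (p i ^ α)⁻¹ := by
      rw [le_mul_inv_iff₀ (Real.rpow_pos_of_pos (hpos i) α)]
      exact hB i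
    have h3 : ((i:ℕ)+1 : ℝ) ^ t ≤ S ^ t * ((p i ^ α)⁻¹) ^ t := by
      rw [← Real.mul_rpow hS0.le (inv_nonneg.mpr (Real.rpow_pos_of_pos (hpos i) α).le)]
      exact Real.rpow_le_rpow (by positivity) hi1 ht.le
    have h4 : p i * ((p i ^ α)⁻¹) ^ t = p i ^ α := by
      rw [← Real.rpow_neg (hpos i).le, ← Real.rpow_mul (hpos i).le]
      nth_rewrite 1 [← Real.rpow_one (p i)]
      rw [← Real.rpow_add (hpos i)]
      congr 1
      linear_combination -hαt
    calc p i * (2:ℝ) ^ (t * (Nat.log 2 ((i:ℕ) + 1) : ℝ))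
        ≤ p i * (((i:ℕ)+1 : ℝ) ^ t) := by
          exact mul_le_mul_of_nonneg_left h2 (hpos i).le
      _ ≤ p i * (S ^ t * ((p i ^ α)⁻¹) ^ t) := mul_le_mul_of_nonneg_left h3 (hpos i).le
      _ = S ^ t * (p i * ((p i ^ α)⁻¹) ^ t) := by ring
      _ = S ^ t * p i ^ α := by rw [h4]
  have hsumle : (∑ i, p i * (2:ℝ) ^ (t * (Nat.log 2 ((i:ℕ) + 1) : ℝ))) ≤ S ^ (1 + t) := by
    calc (∑ i, p i * (2:ℝ) ^ (t * (Nat.log 2 ((i:ℕ) + 1) : ℝ)))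
        ≤ ∑ i, S ^ t * p i ^ α := Finset.sum_le_sum fun i _ => hpt i
      _ = S ^ t * S := by rw [← Finset.mul_sum]
      _ = S ^ (1 + t) := by
          rw [Real.rpow_add hS0]; rw [Real.rpow_one]; ring
  have hE0 : 0 < ∑ i, p i * (2:ℝ) ^ (t * (Nat.log 2 ((i:ℕ) + 1) : ℝ)) :=
    Finset.sum_pos (fun i _ => mul_pos (hpos i) (Real.rpow_pos_of_pos two_pos _))
      ⟨⟨0, hk⟩, Finset.mem_univ _⟩
  have hlog : Real.logb 2 (∑ i, p i * (2:ℝ) ^ (t * (Nat.log 2 ((i:ℕ) + 1) : ℝ)))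
      ≤ (1 + t) * Real.logb 2 S := by
    have := Real.logb_le_logb_of_le (by norm_num : (1:ℝ) < 2) hE0 hsumle
    calc Real.logb 2 (∑ i, p i * (2:ℝ) ^ (t * (Nat.log 2 ((i:ℕ) + 1) : ℝ)))
        ≤ Real.logb 2 (S ^ (1 + t)) := this
      _ = (1 + t) * Real.logb 2 S := by
          rw [Real.logb, Real.log_rpow hS0, Real.logb]; ring
  calc (1 / t) * Real.logb 2 (∑ i, p i * (2:ℝ) ^ (t * (Nat.log 2 ((i:ℕ) + 1) : ℝ)))
      ≤ (1 / t) * ((1 + t) * Real.logb 2 S) :=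
        mul_le_mul_of_nonneg_left hlog (by positivity)
    _ = ((1 + t) / t) * Real.logb 2 S := by ring
end

section
/- Let Y be a random variable on a finite set with distribution P_Y, supported on a set S, and let ℓ : S → ℕ be arbitrary. Then for every t > 0, (1/t)·log₂ E[2^{t·ℓ(Y)}] ≥ H_{1/(1+t)}(Y) − log₂ ∑_{y∈S} 2^{−ℓ(y)}, where H_α(Y) = (1/(1−α))·log₂ ∑_y P_Y(y)^α is the Rényi entropy of order α. -/
open Real Finset

/-- Let `Y` be a random variable on a finite support `α` with
`P_Y(y) > 0` summing to 1, and `ℓ : α → ℕ` arbitrary lengths. Then for every `t > 0`,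
`(1/t)·log₂ E[2^{t·ℓ(Y)}] ≥ H_{1/(1+t)}(Y) − log₂ ∑_y 2^{−ℓ(y)}`, where the Rényi
entropy of order `α = 1/(1+t)` is `(1/(1−α))·log₂ ∑_y P_Y(y)^α = ((1+t)/t)·log₂ ∑_y P_Y(y)^{1/(1+t)}`. -/
theorem cgf_ge_renyi_sub_log_kraft {α : Type*} [Fintype α]
    (p : α → ℝ) (hp : ∀ y, 0 < p y) (hsum : ∑ y, p y = 1)
    (ℓ : α → ℕ) (t : ℝ) (ht : 0 < t) :
    (1 / t) * Real.logb 2 (∑ y, p y * (2 : ℝ) ^ (t * (ℓ y : ℝ)))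
      ≥ ((1 + t) / t) * Real.logb 2 (∑ y, p y ^ (1 / (1 + t)))
        - Real.logb 2 (∑ y, (2 : ℝ) ^ (-(ℓ y : ℝ))) := by
  rcases isEmpty_or_nonempty α with h | h
  · simp [logb]
  have hP : (0:ℝ) < 1 + t := by linarith
  set P : ℝ := 1 + t with hPdef
  set Q : ℝ := (1 + t) / t with hQdef
  have hQ0 : Q ≠ 0 := by positivity
  have hpq : P.HolderConjugate Q := by
    rw [Real.holderConjugate_iff]
    constructor
    · simp only [hPdef]; linarith
    · rw [hPdef, hQdef]
      field_simp
  set A : ℝ := ∑ y, p y * (2 : ℝ) ^ (t * (ℓ y : ℝ)) with hA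
  set K : ℝ := ∑ y, (2 : ℝ) ^ (-(ℓ y : ℝ)) with hK
  set B : ℝ := ∑ y, p y ^ (1 / (1 + t)) with hB
  have hApos : 0 < A := Finset.sum_pos (fun y _ => mul_pos (hp y) (by positivity)) univ_nonempty
  have hKpos : 0 < K := Finset.sum_pos (fun y _ => by positivity) univ_nonempty
  have hBpos : 0 < B := Finset.sum_pos (fun y _ => Real.rpow_pos_of_pos (hp y) _) univ_nonempty
  -- Hölder
  have key : B ≤ A ^ (1 / P) * K ^ (1 / Q) := by
    have H := Real.inner_le_Lp_mul_Lq_of_nonneg (s := (univ : Finset α))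
      (f := fun y => (p y * (2 : ℝ) ^ (t * (ℓ y : ℝ))) ^ (1 / P))
      (g := fun y => ((2 : ℝ) ^ (-(ℓ y : ℝ))) ^ (1 / Q))
      hpq (fun i _ => Real.rpow_nonneg (mul_pos (hp i) (by positivity)).le _) (fun i _ => Real.rpow_nonneg (by positivity) _)
    have e1 : ∀ y : α, (p y * (2 : ℝ) ^ (t * (ℓ y : ℝ))) ^ (1 / P)
        * ((2 : ℝ) ^ (-(ℓ y : ℝ))) ^ (1 / Q) = p y ^ (1 / (1 + t)) := by
      intro y
      rw [Real.mul_rpow (hp y).le (by positivity),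
        ← Real.rpow_mul (by norm_num : (0:ℝ) ≤ 2),
        ← Real.rpow_mul (by norm_num : (0:ℝ) ≤ 2), mul_assoc,
        ← Real.rpow_add (by norm_num : (0:ℝ) < 2)]
      have : t * (ℓ y : ℝ) * (1 / P) + -(ℓ y : ℝ) * (1 / Q) = 0 := by
        rw [hPdef, hQdef]
        field_simp
        ring
      rw [this, Real.rpow_zero, mul_one, hPdef]
    have e2 : ∀ y : α, ((p y * (2 : ℝ) ^ (t * (ℓ y : ℝ))) ^ (1 / P)) ^ P
        = p y * (2 : ℝ) ^ (t * (ℓ y : ℝ)) := by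
      intro y
      rw [← Real.rpow_mul (mul_pos (hp y) (by positivity)).le, one_div,
        inv_mul_cancel₀ (by positivity : P ≠ 0), Real.rpow_one]
    have e3 : ∀ y : α, (((2 : ℝ) ^ (-(ℓ y : ℝ))) ^ (1 / Q)) ^ Q
        = (2 : ℝ) ^ (-(ℓ y : ℝ)) := by
      intro y
      rw [← Real.rpow_mul (by positivity), one_div,
        inv_mul_cancel₀ hQ0, Real.rpow_one]
    calc B = ∑ y, (p y * (2 : ℝ) ^ (t * (ℓ y : ℝ))) ^ (1 / P)
            * ((2 : ℝ) ^ (-(ℓ y : ℝ))) ^ (1 / Q) := by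
          rw [hB]; exact Finset.sum_congr rfl fun y _ => (e1 y).symm
      _ ≤ (∑ y, ((p y * (2 : ℝ) ^ (t * (ℓ y : ℝ))) ^ (1 / P)) ^ P) ^ (1 / P)
            * (∑ y, (((2 : ℝ) ^ (-(ℓ y : ℝ))) ^ (1 / Q)) ^ Q) ^ (1 / Q) := H
      _ = A ^ (1 / P) * K ^ (1 / Q) := by
          rw [hA, hK]
          congr 1 <;> congr 1 <;> exact Finset.sum_congr rfl fun y _ => by
            first | exact e2 y | exact e3 y
  -- take logb
  have hlog : Real.logb 2 B ≤ (1/P) * Real.logb 2 A + (1/Q) * Real.logb 2 K := by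
    have h1 := Real.logb_le_logb_of_le (b := 2) (by norm_num) hBpos key
    rwa [Real.logb_mul (by positivity) (by positivity),
      Real.logb_rpow_eq_mul_logb_of_pos hApos, Real.logb_rpow_eq_mul_logb_of_pos hKpos] at h1
  have hPt : (0:ℝ) < P / t := by positivity
  have hmul := mul_le_mul_of_nonneg_left hlog hPt.le
  rw [ge_iff_le, sub_le_iff_le_add]
  calc P / t * Real.logb 2 B
      ≤ P / t * ((1/P) * Real.logb 2 A + (1/Q) * Real.logb 2 K) := hmul
    _ = 1 / t * Real.logb 2 A + Real.logb 2 K := by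
        rw [hQdef, hPdef]
        field_simp
end

section
/- Let g be an injective map from a finite set of binary strings C ⊆ {0,1}* into a finite set Y with |C| ≤ min(|X|,|Y|) for finite sets X, Y, where each string is assigned its length ℓ. Then ∑_{w∈C} 2^{−ℓ(w)} ≤ log₂(1 + min(|X|,|Y|)). -/
open Real Finset

namespace KraftNonprefixAux

/-- The tails of elements of `C` starting with bit `b`. -/
def tails (C : Finset (List Bool)) (b : Bool) : Finset (List Bool) :=
  (C.filter (fun w => w.head? = some b)).image List.tail

lemma filter_eq_image (C : Finset (List Bool)) (b : Bool) :
    C.filter (fun w => w.head? = some b) = (tails C b).image (List.cons b) := by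
  ext w
  simp only [tails, mem_filter, mem_image]
  constructor
  · rintro ⟨hw, hh⟩
    cases w with
    | nil => simp at hh
    | cons c t =>
      simp only [List.head?_cons, Option.some.injEq] at hh
      refine ⟨t, ⟨c :: t, ⟨hw, ?_⟩, rfl⟩, ?_⟩ <;> simp [hh]
  · rintro ⟨t, ⟨w', ⟨hw', hh'⟩, htail⟩, hcons⟩
    cases w' with
    | nil => simp at hh'
    | cons c t' =>
      simp only [List.head?_cons, Option.some.injEq] at hh'
      subst hh'
      simp only [List.tail_cons] at htail
      subst htail
      subst hcons
      exact ⟨hw', rfl⟩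

lemma sum_filter_eq {M : Type*} [AddCommMonoid M] (C : Finset (List Bool)) (b : Bool)
    (φ : List Bool → M) :
    ∑ w ∈ C.filter (fun w => w.head? = some b), φ w = ∑ t ∈ tails C b, φ (b :: t) := by
  rw [filter_eq_image C b, Finset.sum_image]
  intro x _ y _ h
  exact List.cons_injective h

/-- Three-way splitting of a sum over a finset of lists. -/
lemma sum_split {M : Type*} [AddCommMonoid M] (C : Finset (List Bool)) (φ : List Bool → M) :
    ∑ w ∈ C, φ w = (if [] ∈ C then φ [] else 0)
      + (∑ t ∈ tails C false, φ (false :: t))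
      + (∑ t ∈ tails C true, φ (true :: t)) := by
  rw [← sum_filter_eq C false φ, ← sum_filter_eq C true φ]
  rw [← Finset.sum_filter_add_sum_filter_not C (fun w => w = []) φ]
  have h0 : ∑ w ∈ C.filter (fun w => w = []), φ w = (if [] ∈ C then φ [] else 0) := by
    rw [show C.filter (fun w => w = []) = if [] ∈ C then {[]} else ∅ by convert Finset.filter_eq' C []]
    split <;> simp
  rw [h0]
  rw [← Finset.sum_filter_add_sum_filter_not (C.filter (fun w => ¬w = []))
    (fun w => w.head? = some false) φ, Finset.filter_filter, Finset.filter_filter]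
  have e1 : C.filter (fun w => ¬w = [] ∧ w.head? = some false)
      = C.filter (fun w => w.head? = some false) := by
    apply Finset.filter_congr
    intro w _
    cases w <;> simp
  have e2 : C.filter (fun w => ¬w = [] ∧ ¬w.head? = some false)
      = C.filter (fun w => w.head? = some true) := by
    apply Finset.filter_congr
    intro w _
    cases w with
    | nil => simp
    | cons c t => cases c <;> simp
  rw [e1, e2]
  exact (add_assoc _ _ _).symm

lemma f_cons (b : Bool) (t : List Bool) :
    (2 : ℝ) ^ (-(((b :: t).length : ℝ))) = (1/2) * (2 : ℝ) ^ (-(t.length : ℝ)) := by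
  rw [List.length_cons]
  push_cast
  rw [show -((t.length : ℝ) + 1) = (-(t.length : ℝ)) + (-1) by ring,
    Real.rpow_add (by norm_num), Real.rpow_neg_one]
  ring

/-- Core lemma: non-prefix Kraft-type inequality by strong induction on total length. -/
lemma key : ∀ n : ℕ, ∀ C : Finset (List Bool), (∑ w ∈ C, (w.length + 1)) ≤ n →
    ∑ w ∈ C, (2 : ℝ) ^ (-(w.length : ℝ)) ≤ Real.logb 2 (1 + (C.card : ℝ)) := by
  intro n
  induction n with
  | zero =>
    intro C hC
    have hCe : C = ∅ := by
      by_contra h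
      obtain ⟨w, hw⟩ := Finset.nonempty_iff_ne_empty.mpr h
      have h1 : w.length + 1 ≤ ∑ w ∈ C, (w.length + 1) :=
        Finset.single_le_sum (f := fun w : List Bool => w.length + 1) (fun _ _ => Nat.zero_le _) hw
      omega
    subst hCe
    simp
  | succ n ih =>
    intro C hC
    set A := tails C false with hA
    set B := tails C true with hB
    -- sum identity
    have hSC : ∑ w ∈ C, (2 : ℝ) ^ (-(w.length : ℝ))
        = (if [] ∈ C then (1 : ℝ) else 0)
          + ((1/2) * ∑ t ∈ A, (2 : ℝ) ^ (-(t.length : ℝ))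
            + (1/2) * ∑ t ∈ B, (2 : ℝ) ^ (-(t.length : ℝ))) := by
      rw [sum_split C (fun w => (2 : ℝ) ^ (-(w.length : ℝ)))]
      simp only [f_cons, List.length_nil, Nat.cast_zero, neg_zero, Real.rpow_zero]
      rw [← Finset.mul_sum, ← Finset.mul_sum]
      ring
    -- card identity
    have hcardC : C.card = (if [] ∈ C then 1 else 0) + A.card + B.card := by
      have h := sum_split C (fun _ => (1 : ℕ))
      simpa using h
    -- measure identity
    have hmeas : ∑ w ∈ C, (w.length + 1)
        = (if [] ∈ C then 1 else 0) + (∑ t ∈ A, (t.length + 1) + A.card)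
          + (∑ t ∈ B, (t.length + 1) + B.card) := by
      have := sum_split C (fun w => w.length + 1)
      simp only [List.length_cons, List.length_nil] at this
      rw [this]
      have hA' : ∑ t ∈ A, (t.length + 1 + 1) = ∑ t ∈ A, (t.length + 1) + A.card := by
        rw [Finset.sum_add_distrib, Finset.sum_const, smul_eq_mul, mul_one]
      have hB' : ∑ t ∈ B, (t.length + 1 + 1) = ∑ t ∈ B, (t.length + 1) + B.card := by
        rw [Finset.sum_add_distrib, Finset.sum_const, smul_eq_mul, mul_one]
      rw [hA', hB']
    -- IH applies to A and B
    have hmA : ∑ t ∈ A, (t.length + 1) ≤ n := by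
      rcases A.eq_empty_or_nonempty with h | h
      · simp [h]
      · have hc : 1 ≤ A.card := Finset.card_pos.mpr h
        have := hmeas ▸ hC
        omega
    have hmB : ∑ t ∈ B, (t.length + 1) ≤ n := by
      rcases B.eq_empty_or_nonempty with h | h
      · simp [h]
      · have hc : 1 ≤ B.card := Finset.card_pos.mpr h
        have := hmeas ▸ hC
        omega
    have hIA := ih A hmA
    have hIB := ih B hmB
    -- real arithmetic
    set a : ℝ := (A.card : ℝ) with ha'
    set b : ℝ := (B.card : ℝ) with hb'
    have ha0 : (0:ℝ) ≤ a := Nat.cast_nonneg _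
    have hb0 : (0:ℝ) ≤ b := Nat.cast_nonneg _
    -- concavity step
    have hconc : Real.logb 2 (1 + a) + Real.logb 2 (1 + b)
        ≤ 2 * Real.logb 2 ((2 + a + b) / 2) := by
      have hm : Real.logb 2 ((1 + a) * (1 + b)) = Real.logb 2 (1 + a) + Real.logb 2 (1 + b) :=
        Real.logb_mul (by linarith) (by linarith)
      have hp : Real.logb 2 (((2 + a + b) / 2) ^ (2:ℕ)) = 2 * Real.logb 2 ((2 + a + b) / 2) := by
        rw [Real.logb_pow]; norm_num
      rw [← hm, ← hp]
      rw [Real.logb_le_logb (by norm_num) (by nlinarith) (by positivity)]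
      nlinarith [sq_nonneg (a - b)]
    have hcardR : (C.card : ℝ) = (if [] ∈ C then (1:ℝ) else 0) + a + b := by
      rw [hcardC]
      push_cast
      split <;> simp [ha', hb']
    rw [hSC, hcardR]
    by_cases hmem : [] ∈ C
    · simp only [hmem, if_pos]
      have heq : Real.logb 2 ((2 + a + b) / 2) = Real.logb 2 (2 + a + b) - 1 := by
        rw [Real.logb_div (by linarith) (by norm_num), Real.logb_self_eq_one (by norm_num)]
      have : (1:ℝ) + (1 + a + b) = 2 + a + b := by ring
      rw [this]
      have h2 : (1/2) * ∑ t ∈ A, (2 : ℝ) ^ (-(t.length : ℝ))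
          + (1/2) * ∑ t ∈ B, (2 : ℝ) ^ (-(t.length : ℝ))
          ≤ Real.logb 2 ((2 + a + b) / 2) := by linarith
      linarith
    · simp only [hmem, if_neg, not_false_iff]
      have hmono : Real.logb 2 ((2 + a + b) / 2) ≤ Real.logb 2 (1 + (0 + a + b)) := by
        rw [Real.logb_le_logb (by norm_num) (by linarith) (by linarith)]
        linarith
      linarith

end KraftNonprefixAux

/-- Let `g` be a map from a finite set `C` of binary strings into a
finite set `Y`, injective on `C`, with `|C| ≤ min(|X|,|Y|)` for finite sets `X, Y`.
Then `∑_{w ∈ C} 2^{−ℓ(w)} ≤ log₂(1 + min(|X|,|Y|))`, where `ℓ(w)` is the length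
of the string `w`. -/
theorem kraft_like_nonprefix {X Y : Type*} [Fintype X] [Fintype Y]
    (C : Finset (List Bool)) (g : List Bool → Y)
    (hg : Set.InjOn g (C : Set (List Bool)))
    (hcard : C.card ≤ min (Fintype.card X) (Fintype.card Y)) :
    ∑ w ∈ C, (2 : ℝ) ^ (-(w.length : ℝ))
      ≤ Real.logb 2 (1 + (min (Fintype.card X) (Fintype.card Y) : ℝ)) := by
  have h1 := KraftNonprefixAux.key (∑ w ∈ C, (w.length + 1)) C le_rfl
  refine h1.trans ?_
  rw [Real.logb_le_logb (by norm_num) (by positivity) (by positivity)]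
  have : (C.card : ℝ) ≤ (min (Fintype.card X) (Fintype.card Y) : ℝ) := by
    exact_mod_cast hcard
  linarith
end

section
/- For any M distinct binary strings w₁,...,w_M ∈ {0,1}* (including possibly the empty string), ∑_{i=1}^M 2^{−ℓ(w_i)} ≤ log₂(1+M), where ℓ(w) denotes the length of w; moreover the sum is maximized by choosing the M shortest strings. -/
open Real Finset

namespace SumTwoPowAux

def strVal : List Bool → ℕ
  | [] => 1
  | b :: t => 2 * strVal t + b.toNat

lemma strVal_ge (l : List Bool) : 2 ^ l.length ≤ strVal l := by
  induction l with
  | nil => simp [strVal]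
  | cons b t ih => cases b <;> simp [strVal, pow_succ] <;> omega

lemma strVal_lt (l : List Bool) : strVal l < 2 ^ (l.length + 1) := by
  induction l with
  | nil => simp [strVal]
  | cons b t ih => cases b <;> simp [strVal, pow_succ] <;> omega

lemma strVal_pos (l : List Bool) : 1 ≤ strVal l :=
  le_trans (Nat.one_le_two_pow) (strVal_ge l)

lemma strVal_injective : Function.Injective strVal := by
  intro l1
  induction l1 with
  | nil =>
    intro l2 h
    cases l2 with
    | nil => rfl
    | cons c s =>
      exfalso
      have h1 := strVal_ge (c :: s)
      have h2 : (2:ℕ) ^ (c :: s).length ≥ 2 := by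
        calc (2:ℕ) ≤ 2 ^ 1 := by norm_num
        _ ≤ 2 ^ (c :: s).length := Nat.pow_le_pow_right (by norm_num) (by simp)
      have hs := strVal_pos s
      cases c <;> simp [strVal, Bool.toNat] at h <;> omega
  | cons b t ih =>
    intro l2 h
    cases l2 with
    | nil =>
      exfalso
      have h1 := strVal_ge (b :: t)
      have h2 : (2:ℕ) ^ (b :: t).length ≥ 2 := by
        calc (2:ℕ) ≤ 2 ^ 1 := by norm_num
        _ ≤ 2 ^ (b :: t).length := Nat.pow_le_pow_right (by norm_num) (by simp)
      have hs := strVal_pos t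
      cases b <;> simp [strVal, Bool.toNat] at h <;> omega
    | cons c s =>
      simp only [strVal] at h
      have hb : b = c := by cases b <;> cases c <;> simp_all <;> omega
      have ht : strVal t = strVal s := by cases b <;> cases c <;> simp_all <;> omega
      rw [hb, ih ht]

lemma log_strVal (l : List Bool) : Nat.log 2 (strVal l) = l.length :=
  Nat.log_eq_of_pow_le_of_lt_pow (strVal_ge l) (strVal_lt l)

lemma rpow_neg_nat (k : ℕ) : (2:ℝ) ^ (-(k:ℝ)) = ((2:ℝ) ^ k)⁻¹ := by
  rw [Real.rpow_neg (by norm_num), Real.rpow_natCast]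

noncomputable def g (n : ℕ) : ℝ := (2:ℝ) ^ (-(Nat.log 2 (n + 1) : ℝ))

lemma g_antitone : Antitone g := by
  intro n m hnm
  unfold g
  rw [rpow_neg_nat, rpow_neg_nat]
  apply inv_anti₀ (by positivity)
  exact_mod_cast Nat.pow_le_pow_right (by norm_num) (Nat.log_mono_right (by omega))

lemma strictMono_le {M : ℕ} {f : Fin M → ℕ} (hf : StrictMono f) (i : Fin M) :
    (i : ℕ) ≤ f i := by
  have key : ∀ k, ∀ i : Fin M, (i : ℕ) = k → k ≤ f i := by
    intro k
    induction k with
    | zero => intro i _; exact Nat.zero_le _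
    | succ n ihn =>
      intro i hi
      have hlt : n < M := by omega
      have h1 := ihn ⟨n, hlt⟩ rfl
      have h2 : f ⟨n, hlt⟩ < f i := by
        apply hf
        rw [Fin.lt_def]
        simp only [Fin.val_mk]
        omega
      omega
  exact key _ i rfl

/-- rearrangement: sum of g over any injective enumeration is at most
sum of g over the first M naturals. -/
lemma sum_le_sorted {M : ℕ} (e : Fin M → ℕ) (he : Function.Injective e) :
    ∑ i, g (e i) ≤ ∑ i : Fin M, g (i : ℕ) := by
  classical
  set T := Finset.image e Finset.univ with hT
  have hcard : T.card = M := by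
    rw [hT, Finset.card_image_of_injective _ he, Finset.card_univ, Fintype.card_fin]
  have h1 : ∑ i, g (e i) = ∑ n ∈ T, g n := by
    rw [hT, Finset.sum_image (fun x _ y _ h => he h)]
  rw [h1]
  let φ := T.orderIsoOfFin hcard
  have h2 : ∑ n ∈ T, g n = ∑ i : Fin M, g (φ i : ℕ) := by
    rw [← Finset.sum_coe_sort T g]
    exact (Equiv.sum_comp φ.toEquiv (fun x => g (x : ℕ))).symm
  rw [h2]
  apply Finset.sum_le_sum
  intro i _
  apply g_antitone
  have hmono : StrictMono fun i : Fin M => ((φ i : ℕ)) := by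
    intro a b hab
    exact_mod_cast φ.strictMono hab
  exact strictMono_le hmono i

lemma sum_range_g (M : ℕ) :
    ∑ i ∈ Finset.range M, g i
      = (Nat.log 2 (M + 1) : ℝ)
        + ((M + 1 : ℝ) - 2 ^ (Nat.log 2 (M + 1))) / 2 ^ (Nat.log 2 (M + 1)) := by
  induction M with
  | zero => simp [g]
  | succ m ih =>
    rw [Finset.sum_range_succ, ih]
    set t := Nat.log 2 (m + 1) with ht
    have h1 : 2 ^ t ≤ m + 1 := Nat.pow_log_le_self 2 (by omega)
    have h2 : m + 1 < 2 ^ (t + 1) := Nat.lt_pow_succ_log_self (by norm_num) _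
    have hgm : g m = ((2:ℝ) ^ t)⁻¹ := by unfold g; rw [← ht, rpow_neg_nat]
    have hp : (0:ℝ) < 2 ^ t := by positivity
    by_cases hc : m + 2 < 2 ^ (t + 1)
    · have hlog : Nat.log 2 (m + 1 + 1) = t :=
        Nat.log_eq_of_pow_le_of_lt_pow (by omega) (by omega)
      rw [hlog, hgm]
      push_cast
      field_simp
      ring
    · have hm2 : m + 2 = 2 ^ (t + 1) := by omega
      have hlog : Nat.log 2 (m + 1 + 1) = t + 1 := by
        have : m + 1 + 1 = 2 ^ (t + 1) := by omega
        rw [this, Nat.log_pow (by norm_num)]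
      rw [hlog, hgm]
      have hm2' : (m : ℝ) + 2 = 2 ^ (t + 1) := by exact_mod_cast congrArg Nat.cast hm2
      push_cast
      rw [pow_succ] at hm2' ⊢
      field_simp
      nlinarith [hp]

lemma self_le_logb_one_add {x : ℝ} (h0 : 0 ≤ x) (h1 : x ≤ 1) :
    x ≤ Real.logb 2 (1 + x) := by
  have hlog2 : (0:ℝ) < Real.log 2 := Real.log_pos (by norm_num)
  rw [Real.logb, le_div_iff₀ hlog2]
  have hconc := strictConcaveOn_log_Ioi.concaveOn.2
    (Set.mem_Ioi.mpr one_pos) (Set.mem_Ioi.mpr two_pos)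
    (show (0:ℝ) ≤ 1 - x by linarith) h0 (show (1 - x) + x = 1 by ring)
  have : (1 - x) • (1:ℝ) + x • (2:ℝ) = 1 + x := by simp [smul_eq_mul]; ring
  rw [this] at hconc
  simpa [smul_eq_mul, Real.log_one] using hconc

lemma sorted_sum_le (M : ℕ) :
    ∑ i ∈ Finset.range M, g i ≤ Real.logb 2 (1 + (M : ℝ)) := by
  rw [sum_range_g]
  set t := Nat.log 2 (M + 1) with ht
  have h1 : 2 ^ t ≤ M + 1 := Nat.pow_log_le_self 2 (by omega)
  have h2 : M + 1 < 2 ^ (t + 1) := Nat.lt_pow_succ_log_self (by norm_num) _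
  have hp : (0:ℝ) < 2 ^ t := by positivity
  set x : ℝ := ((M + 1 : ℝ) - 2 ^ t) / 2 ^ t with hx
  have h1' : (2:ℝ) ^ t ≤ (M:ℝ) + 1 := by exact_mod_cast h1
  have h2' : (M:ℝ) + 1 < 2 ^ (t + 1) := by exact_mod_cast h2
  have hx0 : 0 ≤ x := by
    apply div_nonneg _ (le_of_lt hp); linarith
  have hx1 : x ≤ 1 := by
    rw [div_le_one hp]
    rw [pow_succ] at h2'; linarith
  have key : x ≤ Real.logb 2 (1 + x) := self_le_logb_one_add hx0 hx1
  have hprod : (2:ℝ) ^ t * (1 + x) = (M:ℝ) + 1 := by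
    rw [hx]; field_simp; ring
  have hlogt : Real.logb 2 ((2:ℝ) ^ t) = t := by
    rw [Real.logb_pow, Real.logb_self_eq_one (by norm_num)]
    simp
  have : Real.logb 2 (1 + (M:ℝ)) = t + Real.logb 2 (1 + x) := by
    have h1x : (0:ℝ) < 1 + x := by linarith
    rw [add_comm (1:ℝ) (M:ℝ), ← hprod, Real.logb_mul (ne_of_gt hp) (ne_of_gt h1x), hlogt]
  rw [this]
  linarith

end SumTwoPowAux

open SumTwoPowAux in
/-- For any `M` distinct binary strings `w 0, ..., w (M-1)` (possibly
including the empty string), `∑ i, 2^{−ℓ(w i)} ≤ log₂(1+M)`; moreover the sum is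
maximized by choosing the `M` shortest strings, i.e. it is at most
`∑ i, 2^{−⌊log₂ (i+1)⌋}` (the `i`-th shortest binary string has length
`⌊log₂ (i+1)⌋ = Nat.log 2 (i+1)` for the 0-based index `i`). -/
theorem sum_two_pow_neg_length_le {M : ℕ} (w : Fin M → List Bool)
    (hw : Function.Injective w) :
    (∑ i, (2 : ℝ) ^ (-((w i).length : ℝ)) ≤ Real.logb 2 (1 + (M : ℝ))) ∧
    (∑ i, (2 : ℝ) ^ (-((w i).length : ℝ))
      ≤ ∑ i : Fin M, (2 : ℝ) ^ (-(Nat.log 2 ((i : ℕ) + 1) : ℝ))) := by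
  set e : Fin M → ℕ := fun i => strVal (w i) - 1 with he
  have heq : ∀ i, e i + 1 = strVal (w i) := by
    intro i; have := strVal_pos (w i); simp [he]; omega
  have hg : ∀ i, (2 : ℝ) ^ (-((w i).length : ℝ)) = g (e i) := by
    intro i
    unfold g
    rw [heq i, log_strVal]
  have hinj : Function.Injective e := by
    intro i j h
    apply hw
    apply strVal_injective
    rw [← heq i, ← heq j, h]
  have hA : ∑ i, (2 : ℝ) ^ (-((w i).length : ℝ)) ≤ ∑ i : Fin M, g (i : ℕ) := by
    calc ∑ i, (2 : ℝ) ^ (-((w i).length : ℝ)) = ∑ i, g (e i) := by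
          exact Finset.sum_congr rfl (fun i _ => hg i)
      _ ≤ ∑ i : Fin M, g (i : ℕ) := sum_le_sorted e hinj
  constructor
  · refine hA.trans ?_
    have : ∑ i : Fin M, g (i : ℕ) = ∑ i ∈ Finset.range M, g i := by
      exact Fin.sum_univ_eq_sum_range g M
    rw [this]
    exact sorted_sum_le M
  · exact hA
end

section
/- Achievability: For any finite source X on 𝒳, finite reproduction alphabet 𝒴, distortion measure d, distortion level D ≥ 0, ε ∈ [0,1) with P[min_y d(X,y) > D] ≤ ε, and t > 0, there exists a (possibly stochastic) encoder f : 𝒳 → {0,1}* and deterministic decoder g : {0,1}* → 𝒴 such that P[d(X, g(f(X))) > D] ≤ ε and (1/t)·log₂ E[2^{t·ℓ(f(X))}] ≤ G^{D,ε}_{1/(1+t)}(X), where G^{D,ε}_α(X) = min over conditional distributions P_{Y|X} with P[d(X,Y) > D] ≤ ε of the Rényi entropy H_α(Y) of the induced marginal of Y. -/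
open Real Finset

namespace LossyAux

def gobits (n : ℕ) : List Bool :=
  if h : n ≤ 1 then [] else decide (n % 2 = 1) :: gobits (n / 2)
  termination_by n
  decreasing_by exact Nat.div_lt_self (by omega) (by omega)

def decb : List Bool → ℕ
  | [] => 1
  | b :: l => 2 * decb l + b.toNat

theorem decb_gobits : ∀ n, 1 ≤ n → decb (gobits n) = n := by
  intro n
  induction n using Nat.strong_induction_on with
  | _ n ih =>
    intro hn
    rw [gobits]
    split
    · simp [decb]; omega
    · rename_i h
      have h2 : 2 ≤ n := by omega
      have := ih (n / 2) (Nat.div_lt_self (by omega) (by omega)) (by omega)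
      simp [decb, this]
      rcases Nat.even_or_odd n with he | ho
      · have : n % 2 = 0 := Nat.even_iff.mp he
        simp [this]; omega
      · have : n % 2 = 1 := Nat.odd_iff.mp ho
        simp [this]; omega

theorem pow_len_gobits : ∀ n, 1 ≤ n → 2 ^ (gobits n).length ≤ n := by
  intro n
  induction n using Nat.strong_induction_on with
  | _ n ih =>
    intro hn
    rw [gobits]
    split
    · simpa using hn
    · rename_i h
      have := ih (n / 2) (Nat.div_lt_self (by omega) (by omega)) (by omega)
      simp only [List.length_cons, pow_succ]
      omega

end LossyAux

/-- Achievability. For a finite source `X` with pmf `p` on `𝒳`, finite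
reproduction alphabet `𝒴`, distortion measure `d`, `D ≥ 0`, `ε ∈ [0,1)` with
`P[min_y d(X,y) > D] ≤ ε`, and `t > 0`, there exist a finite codeword set
`W ⊆ {0,1}*`, a (possibly stochastic) encoder `f : 𝒳 → (W → [0,1])` and a
deterministic decoder `g : {0,1}* → 𝒴` such that `P[d(X, g(f(X))) > D] ≤ ε` and
`(1/t)·log₂ E[2^{t·ℓ(f(X))}] ≤ G^{D,ε}_{1/(1+t)}(X)`, the latter expressed as: the
cumulant generating function is at most the Rényi entropy `H_{1/(1+t)}` of the
output marginal of every conditional distribution `Q = P_{Y|X}` satisfying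
`P[d(X,Y) > D] ≤ ε`. -/
theorem lossy_achievability {𝒳 𝒴 : Type*} [Fintype 𝒳] [Fintype 𝒴] [Nonempty 𝒴]
    (p : 𝒳 → ℝ) (hp : ∀ x, 0 ≤ p x) (hpsum : ∑ x, p x = 1)
    (d : 𝒳 → 𝒴 → ℝ) (hd : ∀ x y, 0 ≤ d x y)
    (D : ℝ) (hD : 0 ≤ D) (ε : ℝ) (hε0 : 0 ≤ ε) (hε1 : ε < 1)
    (S : Finset 𝒳) (hS : ∀ x, x ∈ S ↔ ∀ y : 𝒴, D < d x y)
    (hfeas : ∑ x ∈ S, p x ≤ ε)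
    (t : ℝ) (ht : 0 < t) :
    ∃ (W : Finset (List Bool)) (f : 𝒳 → List Bool → ℝ) (g : List Bool → 𝒴),
      (∀ x w, 0 ≤ f x w) ∧
      (∀ x, ∀ w ∉ W, f x w = 0) ∧
      (∀ x, ∑ w ∈ W, f x w = 1) ∧
      -- excess distortion probability at most ε
      (∑ x, p x * ∑ w ∈ W.filter (fun w => D < d x (g w)), f x w) ≤ ε ∧
      -- cumulant generating function bounded by the Rényi-entropy-based quantity
      (∀ Q : 𝒳 → 𝒴 → ℝ,
        (∀ x y, 0 ≤ Q x y) → (∀ x, ∑ y, Q x y = 1) →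
        (∑ x, p x * ∑ y ∈ Finset.univ.filter (fun y => D < d x y), Q x y) ≤ ε →
        (1 / t) * Real.logb 2
            (∑ x, p x * ∑ w ∈ W, f x w * (2 : ℝ) ^ (t * (w.length : ℝ)))
          ≤ ((1 + t) / t) *
              Real.logb 2 (∑ y, (∑ x, p x * Q x y) ^ (1 / (1 + t )))) := by
  classical
  have h1t : (0:ℝ) < 1 + t := by linarith
  set α : ℝ := 1 / (1 + t) with hαdef
  have hα0 : 0 < α := by positivity
  have hα1 : α ≤ 1 := by rw [hαdef, div_le_one h1t]; linarith
  set F : (𝒳 → 𝒴 → ℝ) → ℝ := fun Q => ∑ y, (∑ x, p x * Q x y) ^ α with hFdef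
  set K : Set (𝒳 → 𝒴 → ℝ) := {Q | (∀ x y, 0 ≤ Q x y) ∧ (∀ x, ∑ y, Q x y = 1) ∧
      (∑ x, p x * ∑ y ∈ Finset.univ.filter (fun y => D < d x y), Q x y) ≤ ε} with hKdef
  -- K is compact
  have hev : ∀ (x : 𝒳) (y : 𝒴), Continuous (fun Q : 𝒳 → 𝒴 → ℝ => Q x y) :=
    fun x y => (continuous_apply y).comp (continuous_apply x)
  have hKcl : IsClosed K := by
    have c1 : IsClosed {Q : 𝒳 → 𝒴 → ℝ | ∀ x y, 0 ≤ Q x y} := by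
      simp only [Set.setOf_forall]
      exact isClosed_iInter fun x => isClosed_iInter fun y =>
        isClosed_le continuous_const (hev x y)
    have c2 : IsClosed {Q : 𝒳 → 𝒴 → ℝ | ∀ x, ∑ y, Q x y = 1} := by
      simp only [Set.setOf_forall]
      exact isClosed_iInter fun x =>
        isClosed_eq (continuous_finset_sum _ fun y _ => hev x y) continuous_const
    have c3 : IsClosed {Q : 𝒳 → 𝒴 → ℝ |
        (∑ x, p x * ∑ y ∈ Finset.univ.filter (fun y => D < d x y), Q x y) ≤ ε} :=
      isClosed_le (continuous_finset_sum _ fun x _ =>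
        continuous_const.mul (continuous_finset_sum _ fun y _ => hev x y)) continuous_const
    have hKeq : K = {Q : 𝒳 → 𝒴 → ℝ | ∀ x y, 0 ≤ Q x y} ∩
        ({Q : 𝒳 → 𝒴 → ℝ | ∀ x, ∑ y, Q x y = 1} ∩ {Q : 𝒳 → 𝒴 → ℝ |
        (∑ x, p x * ∑ y ∈ Finset.univ.filter (fun y => D < d x y), Q x y) ≤ ε}) := rfl
    rw [hKeq]
    exact c1.inter (c2.inter c3)
  have hsub : K ⊆ Set.Icc (0 : 𝒳 → 𝒴 → ℝ) 1 := by
    rintro Q ⟨h0, h1, -⟩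
    refine ⟨fun x y => h0 x y, fun x y => ?_⟩
    have : Q x y ≤ ∑ y', Q x y' :=
      Finset.single_le_sum (fun y' _ => h0 x y') (Finset.mem_univ y)
    rw [h1 x] at this
    exact this
  have hKcomp : IsCompact K := (isCompact_Icc).of_isClosed_subset hKcl hsub
  -- K nonempty
  have hfeasx : ∀ x, x ∉ S → ∃ y, d x y ≤ D := by
    intro x hx
    by_contra h
    push_neg at h
    exact hx ((hS x).mpr h)
  set y0 : 𝒳 → 𝒴 := fun x => if h : ∃ y, d x y ≤ D then h.choose else Classical.arbitrary 𝒴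
    with hy0def
  have hKne : K.Nonempty := by
    refine ⟨fun x y => if y = y0 x then 1 else 0, fun x y => by dsimp only; split <;> norm_num,
      fun x => by simp, ?_⟩
    have hzero : ∀ x ∉ S,
        p x * ∑ y ∈ Finset.univ.filter (fun y => D < d x y),
          (if y = y0 x then (1:ℝ) else 0) = 0 := by
      intro x hx
      obtain ⟨y, hy⟩ := hfeasx x hx
      have hex : ∃ y, d x y ≤ D := ⟨y, hy⟩
      have hy0 : d x (y0 x) ≤ D := by
        rw [hy0def]; dsimp only; rw [dif_pos hex]; exact hex.choose_spec
      have : ∑ y ∈ Finset.univ.filter (fun y => D < d x y),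
          (if y = y0 x then (1:ℝ) else 0) = 0 := by
        rw [Finset.sum_ite_eq' _ (y0 x) (fun _ => (1:ℝ))]
        rw [if_neg]
        simp only [Finset.mem_filter, Finset.mem_univ, true_and]
        exact not_lt.mpr hy0
      rw [this, mul_zero]
    calc ∑ x, p x * ∑ y ∈ Finset.univ.filter (fun y => D < d x y),
          (if y = y0 x then (1:ℝ) else 0)
        = ∑ x ∈ S, p x * ∑ y ∈ Finset.univ.filter (fun y => D < d x y),
          (if y = y0 x then (1:ℝ) else 0) :=
          (Finset.sum_subset (Finset.subset_univ S) (fun x _ hx => hzero x hx)).symm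
      _ ≤ ∑ x ∈ S, p x := by
          refine Finset.sum_le_sum fun x _ => ?_
          have h1 : ∑ y ∈ Finset.univ.filter (fun y => D < d x y),
              (if y = y0 x then (1:ℝ) else 0) ≤ 1 := by
            rw [Finset.sum_ite_eq' _ (y0 x) (fun _ => (1:ℝ))]
            split <;> norm_num
          nlinarith [hp x, Finset.sum_le_sum (s := Finset.univ.filter (fun y => D < d x y))
            (fun y (_ : y ∈ Finset.univ.filter (fun y => D < d x y)) =>
              le_refl (if y = y0 x then (1:ℝ) else 0))]
      _ ≤ ε := hfeas
  -- continuity of F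
  have hFcont : Continuous F := by
    refine continuous_finset_sum _ fun y _ => Continuous.rpow_const ?_ fun Q => Or.inr hα0.le
    exact continuous_finset_sum _ fun x _ => continuous_const.mul (hev x y)
  obtain ⟨Qs, hQsK, hQsmin⟩ := hKcomp.exists_isMinOn hKne hFcont.continuousOn
  obtain ⟨hQs0, hQs1, hQsε⟩ := hQsK
  -- marginal
  set P : 𝒴 → ℝ := fun y => ∑ x, p x * Qs x y with hPdef
  have hP0 : ∀ y, 0 ≤ P y := fun y =>
    Finset.sum_nonneg fun x _ => mul_nonneg (hp x) (hQs0 x y)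
  have hPsum : ∑ y, P y = 1 := by
    rw [hPdef]
    dsimp only
    rw [Finset.sum_comm]
    calc ∑ x, ∑ y, p x * Qs x y = ∑ x, p x * ∑ y, Qs x y := by
          refine Finset.sum_congr rfl fun x _ => ?_
          rw [Finset.mul_sum]
      _ = 1 := by
          rw [← hpsum]
          exact Finset.sum_congr rfl fun x _ => by rw [hQs1 x, mul_one]
  set n : ℕ := Fintype.card 𝒴 with hndef
  set e0 : Fin n ≃ 𝒴 := (Fintype.equivFin 𝒴).symm with he0def
  set σ : Equiv.Perm (Fin n) := Tuple.sort (fun i => -P (e0 i)) with hσdef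
  set eE : Fin n ≃ 𝒴 := σ.trans e0 with heEdef
  have hmono : ∀ i j : Fin n, j ≤ i → P (eE i) ≤ P (eE j) := by
    intro i j hji
    have h := Tuple.monotone_sort (fun i => -P (e0 i)) hji
    simp only [Function.comp_apply] at h
    have h1 : P (eE i) = P (e0 (σ i)) := rfl
    have h2 : P (eE j) = P (e0 (σ j)) := rfl
    rw [h1, h2]
    linarith
  set c : Fin n → List Bool := fun i => LossyAux.gobits ((i : ℕ) + 1) with hcdef
  have hcinj : Function.Injective c := by
    intro i j hij
    have h1 := LossyAux.decb_gobits ((i:ℕ)+1) (by omega)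
    have h2 := LossyAux.decb_gobits ((j:ℕ)+1) (by omega)
    have h3 : LossyAux.decb (c i) = LossyAux.decb (c j) := by rw [hij]
    rw [hcdef] at h3
    dsimp only at h3
    rw [h1, h2] at h3
    exact Fin.ext (by omega)
  set W : Finset (List Bool) := Finset.image c Finset.univ with hWdef
  set f : 𝒳 → List Bool → ℝ := fun x w => ∑ i, if c i = w then Qs x (eE i) else 0 with hfdef
  set g : List Bool → 𝒴 := fun w =>
    if h : ∃ i : Fin n, c i = w then eE h.choose else Classical.arbitrary 𝒴 with hgdef
  have hg : ∀ i, g (c i) = eE i := by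
    intro i
    have hex : ∃ j : Fin n, c j = c i := ⟨i, rfl⟩
    rw [hgdef]
    dsimp only
    rw [dif_pos hex]
    congr 1
    exact hcinj hex.choose_spec
  have hcW : ∀ i, c i ∈ W := fun i => Finset.mem_image_of_mem c (Finset.mem_univ i)
  have key : ∀ (x : 𝒳) (φ : List Bool → ℝ),
      ∑ w ∈ W, f x w * φ w = ∑ i, Qs x (eE i) * φ (c i) := by
    intro x φ
    rw [hfdef]
    dsimp only
    simp only [Finset.sum_mul, ite_mul, zero_mul]
    rw [Finset.sum_comm]
    refine Finset.sum_congr rfl fun i _ => ?_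
    rw [Finset.sum_ite_eq _ (c i) (fun w => Qs x (eE i) * φ w), if_pos (hcW i)]
  refine ⟨W, f, g, ?_, ?_, ?_, ?_, ?_⟩
  · intro x w
    refine Finset.sum_nonneg fun i _ => ?_
    split
    · exact hQs0 x (eE i)
    · exact le_refl 0
  · intro x w hw
    rw [hfdef]
    dsimp only
    refine Finset.sum_eq_zero fun i _ => ?_
    rw [if_neg]
    intro h
    exact hw (h ▸ hcW i)
  · intro x
    have h := key x (fun _ => 1)
    simp only [mul_one] at h
    rw [h, Equiv.sum_comp eE (Qs x), hQs1 x]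
  · have hx : ∀ x, ∑ w ∈ W.filter (fun w => D < d x (g w)), f x w
        = ∑ y ∈ Finset.univ.filter (fun y => D < d x y), Qs x y := by
      intro x
      calc ∑ w ∈ W.filter (fun w => D < d x (g w)), f x w
          = ∑ w ∈ W, f x w * (if D < d x (g w) then 1 else 0) := by
            rw [Finset.sum_filter]
            refine Finset.sum_congr rfl fun w _ => ?_
            split <;> simp
        _ = ∑ i, Qs x (eE i) * (if D < d x (g (c i)) then 1 else 0) := key x _
        _ = ∑ i, (fun y => if D < d x y then Qs x y else 0) (eE i) := by
            refine Finset.sum_congr rfl fun i _ => ?_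
            rw [hg i]
            dsimp only
            split <;> simp
        _ = ∑ y, if D < d x y then Qs x y else 0 :=
            Equiv.sum_comp eE (fun y => if D < d x y then Qs x y else 0)
        _ = ∑ y ∈ Finset.univ.filter (fun y => D < d x y), Qs x y :=
            (Finset.sum_filter _ _).symm
    calc ∑ x, p x * ∑ w ∈ W.filter (fun w => D < d x (g w)), f x w
        = ∑ x, p x * ∑ y ∈ Finset.univ.filter (fun y => D < d x y), Qs x y :=
          Finset.sum_congr rfl fun x _ => by rw [hx x]
      _ ≤ ε := hQsε
  · intro Q hQ0 hQ1 hQe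
    have hQK : Q ∈ K := ⟨hQ0, hQ1, hQe⟩
    have hFQ : F Qs ≤ F Q := isMinOn_iff.mp hQsmin Q hQK
    set Sv : ℝ := ∑ y, P y ^ α with hSvdef
    have hSvF : Sv = F Qs := by rw [hSvdef, hFdef]
    have hPle1 : ∀ y, P y ≤ 1 := by
      intro y
      rw [← hPsum]
      exact Finset.single_le_sum (fun y' _ => hP0 y') (Finset.mem_univ y)
    have hSv1 : 1 ≤ Sv := by
      rw [hSvdef, ← hPsum]
      refine Finset.sum_le_sum fun y _ => ?_
      rcases eq_or_lt_of_le (hP0 y) with h | h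
      · rw [← h, Real.zero_rpow hα0.ne']
      · calc P y = P y ^ (1:ℝ) := (Real.rpow_one _).symm
          _ ≤ P y ^ α := Real.rpow_le_rpow_of_exponent_ge h (hPle1 y) hα1
    have hSv0 : 0 < Sv := lt_of_lt_of_le one_pos hSv1
    have hSeq : ∑ i, P (eE i) ^ α = Sv := by
      rw [hSvdef]; exact Equiv.sum_comp eE (fun y => P y ^ α)
    have hA' : (∑ x, p x * ∑ w ∈ W, f x w * (2:ℝ) ^ (t * (w.length : ℝ)))
        = ∑ i, P (eE i) * (2:ℝ) ^ (t * ((c i).length : ℝ)) := by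
      calc ∑ x, p x * ∑ w ∈ W, f x w * (2:ℝ) ^ (t * (w.length : ℝ))
          = ∑ x, p x * ∑ i, Qs x (eE i) * (2:ℝ) ^ (t * ((c i).length : ℝ)) :=
            Finset.sum_congr rfl fun x _ => by
              rw [key x (fun w => (2:ℝ) ^ (t * (w.length : ℝ)))]
        _ = ∑ i, ∑ x, p x * (Qs x (eE i) * (2:ℝ) ^ (t * ((c i).length : ℝ))) := by
            simp only [Finset.mul_sum]
            exact Finset.sum_comm
        _ = ∑ i, P (eE i) * (2:ℝ) ^ (t * ((c i).length : ℝ)) := by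
            refine Finset.sum_congr rfl fun i _ => ?_
            rw [hPdef]
            dsimp only
            rw [Finset.sum_mul]
            exact Finset.sum_congr rfl fun x _ => by ring
    have hstep : ∀ i : Fin n,
        P (eE i) * (2:ℝ) ^ (t * ((c i).length : ℝ)) ≤ Sv ^ t * P (eE i) ^ α := by
      intro i
      have hlen : (2:ℝ) ^ (t * ((c i).length : ℝ)) ≤ ((i:ℕ) + 1 : ℝ) ^ t := by
        have h2 : (2:ℝ) ^ (t * ((c i).length:ℝ)) = ((2 ^ (c i).length : ℕ) : ℝ) ^ t := by
          rw [mul_comm, Real.rpow_mul (by norm_num : (0:ℝ) ≤ 2), Real.rpow_natCast]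
          push_cast
          ring
        rw [h2]
        refine Real.rpow_le_rpow (by positivity) ?_ ht.le
        have h4 := LossyAux.pow_len_gobits ((i:ℕ)+1) (by omega)
        rw [hcdef]
        exact_mod_cast h4
      rcases eq_or_lt_of_le (hP0 (eE i)) with hq | hq
      · rw [← hq, Real.zero_rpow hα0.ne']
        simp
      · have hkey : ((i:ℕ) + 1 : ℝ) * P (eE i) ^ α ≤ Sv := by
          have hcard : ((Finset.Iic i).card : ℝ) = (i:ℕ) + 1 := by
            rw [Fin.card_Iic]; push_cast; ring
          calc ((i:ℕ)+1 : ℝ) * P (eE i) ^ α = ∑ _j ∈ Finset.Iic i, P (eE i) ^ α := by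
                rw [Finset.sum_const, nsmul_eq_mul, hcard]
            _ ≤ ∑ j ∈ Finset.Iic i, P (eE j) ^ α :=
                Finset.sum_le_sum fun j hj =>
                  Real.rpow_le_rpow (hP0 _) (hmono i j (Finset.mem_Iic.mp hj)) hα0.le
            _ ≤ ∑ j, P (eE j) ^ α := Finset.sum_le_sum_of_subset_of_nonneg
                  (Finset.subset_univ _) (fun j _ _ => Real.rpow_nonneg (hP0 _) α)
            _ = Sv := hSeq
        have ha : 0 < P (eE i) ^ α := Real.rpow_pos_of_pos hq α
        have h1 : ((i:ℕ)+1:ℝ) ≤ Sv / P (eE i) ^ α := (le_div_iff₀ ha).mpr hkey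
        have h2 : ((i:ℕ)+1:ℝ) ^ t ≤ Sv ^ t / P (eE i) ^ (α * t) := by
          rw [Real.rpow_mul (hP0 (eE i)), ← Real.div_rpow hSv0.le ha.le]
          exact Real.rpow_le_rpow (by positivity) h1 ht.le
        have hexp : 1 - α * t = α := by
          rw [hαdef]
          field_simp
          ring
        have h3 : P (eE i) / P (eE i) ^ (α * t) = P (eE i) ^ (1 - α * t) := by
          rw [Real.rpow_sub hq, Real.rpow_one]
        calc P (eE i) * (2:ℝ) ^ (t * ((c i).length : ℝ))
            ≤ P (eE i) * ((i:ℕ)+1:ℝ) ^ t := mul_le_mul_of_nonneg_left hlen (hP0 _)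
          _ ≤ P (eE i) * (Sv ^ t / P (eE i) ^ (α * t)) :=
              mul_le_mul_of_nonneg_left h2 (hP0 _)
          _ = Sv ^ t * (P (eE i) / P (eE i) ^ (α * t)) := by ring
          _ = Sv ^ t * P (eE i) ^ α := by rw [h3, hexp]
    have hAle : (∑ x, p x * ∑ w ∈ W, f x w * (2:ℝ) ^ (t * (w.length : ℝ)))
        ≤ Sv ^ (1 + t) := by
      rw [hA']
      calc ∑ i, P (eE i) * (2:ℝ) ^ (t * ((c i).length : ℝ))
          ≤ ∑ i, Sv ^ t * P (eE i) ^ α := Finset.sum_le_sum fun i _ => hstep i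
        _ = Sv ^ t * Sv := by rw [← Finset.mul_sum, hSeq]
        _ = Sv ^ (1 + t) := by rw [add_comm, Real.rpow_add_one hSv0.ne' t]
    have hA1 : 1 ≤ (∑ x, p x * ∑ w ∈ W, f x w * (2:ℝ) ^ (t * (w.length : ℝ))) := by
      rw [hA']
      calc (1:ℝ) = ∑ i, P (eE i) := by rw [Equiv.sum_comp eE P, hPsum]
        _ ≤ ∑ i, P (eE i) * (2:ℝ) ^ (t * ((c i).length : ℝ)) := by
            refine Finset.sum_le_sum fun i _ => ?_
            refine le_mul_of_one_le_right (hP0 _) ?_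
            calc (1:ℝ) = (2:ℝ) ^ (0:ℝ) := (Real.rpow_zero 2).symm
              _ ≤ (2:ℝ) ^ (t * ((c i).length : ℝ)) :=
                Real.rpow_le_rpow_of_exponent_le one_le_two (by positivity)
    have hA0 : 0 < (∑ x, p x * ∑ w ∈ W, f x w * (2:ℝ) ^ (t * (w.length : ℝ))) :=
      lt_of_lt_of_le one_pos hA1
    have hFQSv : Sv ≤ ∑ y, (∑ x, p x * Q x y) ^ α := by
      rw [hSvF]; exact hFQ
    calc (1 / t) * Real.logb 2 (∑ x, p x * ∑ w ∈ W, f x w * (2:ℝ) ^ (t * (w.length : ℝ)))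
        ≤ (1 / t) * Real.logb 2 (Sv ^ (1 + t)) := by
          refine mul_le_mul_of_nonneg_left ?_ (by positivity)
          exact Real.logb_le_logb_of_le one_lt_two hA0 hAle
      _ = ((1 + t) / t) * Real.logb 2 Sv := by
          simp only [Real.logb]
          rw [Real.log_rpow hSv0]
          ring
      _ ≤ ((1 + t) / t) * Real.logb 2 (∑ y, (∑ x, p x * Q x y) ^ α) := by
          refine mul_le_mul_of_nonneg_left ?_ (by positivity)
          exact Real.logb_le_logb_of_le one_lt_two hSv0 hFQSv
end

section
/- Converse: For any finite source X on 𝒳, finite 𝒴, D ≥ 0, ε ∈ [0,1), t > 0, any code (f,g) with injective decoder g satisfying P[d(X, g(f(X))) > D] ≤ ε must satisfy (1/t)·log₂ E[2^{t·ℓ(f(X))}] ≥ G^{D,ε}_{1/(1+t)}(X) − log₂ log₂(1 + min(|𝒳|,|𝒴|)), where G^{D,ε}_α(X) is the minimum Rényi entropy H_α(Y) over all conditional distributions P_{Y|X} with P[d(X,Y) > D] ≤ ε. -/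
open Real Finset

set_option maxHeartbeats 2000000


private def enc (w : List Bool) : ℕ := w.foldl (fun n b => 2 * n + cond b 1 0) 1

private lemma enc_append (w : List Bool) (b : Bool) :
    enc (w ++ [b]) = 2 * enc w + cond b 1 0 := by
  simp [enc, List.foldl_append]

private lemma enc_bounds (w : List Bool) :
    2 ^ w.length ≤ enc w ∧ enc w < 2 ^ (w.length + 1) := by
  induction w using List.reverseRecOn with
  | nil => simp [enc]
  | append_singleton w b ih =>
    rw [enc_append]
    rcases ih with ⟨h1, h2⟩
    constructor
    · simp only [List.length_append, List.length_singleton]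
      cases b <;> simp <;> omega
    · simp only [List.length_append, List.length_singleton]
      cases b <;> simp <;> omega

private lemma enc_inj : Function.Injective enc := by
  intro w1
  induction w1 using List.reverseRecOn with
  | nil =>
    intro w2 h
    induction w2 using List.reverseRecOn with
    | nil => rfl
    | append_singleton w2 b _ =>
      exfalso
      rw [enc_append] at h
      have h1 : (1:ℕ) ≤ enc w2 := le_trans Nat.one_le_two_pow (enc_bounds w2).1
      have h0 : enc [] = 1 := rfl
      rw [h0] at h
      cases b <;> simp at h <;> omega
  | append_singleton w1 b1 ih =>
    intro w2 h
    induction w2 using List.reverseRecOn with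
    | nil =>
      exfalso
      rw [enc_append] at h
      have h1 : (1:ℕ) ≤ enc w1 := le_trans Nat.one_le_two_pow (enc_bounds w1).1
      have h0 : enc [] = 1 := rfl
      rw [h0] at h
      cases b1 <;> simp at h <;> omega
    | append_singleton w2 b2 _ =>
      rw [enc_append, enc_append] at h
      have h1 := (enc_bounds w1).1
      have h2 := (enc_bounds w2).1
      have hb : b1 = b2 := by cases b1 <;> cases b2 <;> simp at h ⊢ <;> omega
      subst hb
      have : enc w1 = enc w2 := by cases b1 <;> simp at h <;> omega
      rw [ih this]

private lemma card_lt_pow (F : Finset (List Bool)) (L : ℕ)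
    (hL : ∀ w ∈ F, w.length ≤ L) : F.card < 2 ^ (L + 1) := by
  have hinj : Set.InjOn enc F := fun a _ b _ h => enc_inj h
  have : F.card = (F.image enc).card := (Finset.card_image_of_injOn hinj).symm
  rw [this]
  have hsub : F.image enc ⊆ Finset.Ico 1 (2 ^ (L + 1)) := by
    intro n hn
    rcases Finset.mem_image.mp hn with ⟨w, hw, rfl⟩
    rw [Finset.mem_Ico]
    refine ⟨(enc_bounds w).1.trans' (Nat.one_le_two_pow), ?_⟩
    calc enc w < 2 ^ (w.length + 1) := (enc_bounds w).2
      _ ≤ 2 ^ (L + 1) := Nat.pow_le_pow_right (by norm_num) (by have := hL w hw; omega)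
  have := Finset.card_le_card hsub
  rw [Nat.card_Ico] at this
  have h2 : 0 < 2 ^ (L + 1) := by positivity
  omega


private noncomputable def psi (N : ℕ) : ℝ :=
  ∑ i ∈ Finset.Icc 1 N, ((2:ℝ) ^ (Nat.log 2 i))⁻¹

private lemma psi_succ (N : ℕ) :
    psi (N + 1) = psi N + ((2:ℝ) ^ (Nat.log 2 (N + 1)))⁻¹ := by
  unfold psi
  rw [← Finset.sum_Icc_succ_top (by omega : 1 ≤ N + 1)]

private lemma kraft_le_psi (F : Finset (List Bool)) :
    ∑ w ∈ F, ((2:ℝ) ^ w.length)⁻¹ ≤ psi F.card := by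
  suffices H : ∀ n (F : Finset (List Bool)), F.card = n →
      ∑ w ∈ F, ((2:ℝ) ^ w.length)⁻¹ ≤ psi n from H F.card F rfl
  intro n
  induction n with
  | zero =>
    intro F hF
    rw [Finset.card_eq_zero] at hF
    subst hF
    simp [psi]
  | succ n ih =>
    intro F hF
    have hne : F.Nonempty := Finset.card_pos.mp (by omega)
    obtain ⟨wm, hwm, hmax⟩ := F.exists_max_image List.length hne
    have hcard' : (F.erase wm).card = n := by
      rw [Finset.card_erase_of_mem hwm, hF]
      omega
    rw [← Finset.sum_erase_add F _ hwm, psi_succ]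
    refine add_le_add (ih _ hcard') ?_
    have hlt : n + 1 < 2 ^ (wm.length + 1) := by
      rw [← hF]
      exact card_lt_pow F wm.length hmax
    have hlog : Nat.log 2 (n + 1) ≤ wm.length := by
      have := (Nat.log_lt_iff_lt_pow (by norm_num : 1 < 2) (by omega : n + 1 ≠ 0)).mpr hlt
      omega
    have hpow : (2:ℝ) ^ (Nat.log 2 (n+1)) ≤ (2:ℝ) ^ wm.length :=
      pow_le_pow_right₀ (by norm_num) hlog
    exact inv_anti₀ (by positivity) hpow

private lemma two_rpow_le_one_add (v : ℝ) (h0 : 0 ≤ v) (h1 : v ≤ 1) :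
    (2:ℝ) ^ v ≤ 1 + v := by
  have h := convexOn_exp.2 (Set.mem_univ (0:ℝ)) (Set.mem_univ (Real.log 2))
    (by linarith : (0:ℝ) ≤ 1 - v) h0 (by ring)
  rw [Real.rpow_def_of_pos two_pos]
  have e1 : Real.log 2 * v = (1 - v) • (0:ℝ) + v • Real.log 2 := by
    simp [smul_eq_mul]; ring
  rw [e1]
  refine h.trans ?_
  rw [smul_eq_mul, smul_eq_mul, Real.exp_zero, Real.exp_log two_pos]
  linarith

private lemma psi_closed (N : ℕ) (hN : 1 ≤ N) :
    psi N = (Nat.log 2 N : ℝ) + ((N:ℝ) + 1 - 2 ^ (Nat.log 2 N)) / 2 ^ (Nat.log 2 N) := by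
  induction N with
  | zero => omega
  | succ n ih =>
    rcases Nat.eq_or_lt_of_le hN with h1 | h1
    · have hn0 : n = 0 := by omega
      subst hn0
      norm_num [psi, Finset.Icc_self, Nat.log_one_right]
    · have hn : 1 ≤ n := by omega
      have hn0 : n ≠ 0 := by omega
      have hlow : 2 ^ Nat.log 2 n ≤ n := Nat.pow_log_le_self 2 hn0
      have hhigh : n < 2 ^ (Nat.log 2 n + 1) := Nat.lt_pow_succ_log_self (by norm_num) n
      rw [psi_succ, ih hn]
      rcases Nat.lt_or_ge (n + 1) (2 ^ (Nat.log 2 n + 1)) with hc | hc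
      · have hk : Nat.log 2 (n + 1) = Nat.log 2 n :=
          Nat.log_eq_of_pow_le_of_lt_pow (by omega) hc
        rw [hk]
        have hpos : (0:ℝ) < 2 ^ (Nat.log 2 n) := by positivity
        push_cast
        field_simp
        ring
      · have he : n + 1 = 2 ^ (Nat.log 2 n + 1) := by omega
        have hk : Nat.log 2 (n + 1) = Nat.log 2 n + 1 := by
          rw [he, Nat.log_pow (by norm_num)]
        rw [hk]
        have hpos : (0:ℝ) < 2 ^ (Nat.log 2 n) := by positivity
        have he' : (n:ℝ) + 1 = 2 ^ (Nat.log 2 n + 1) := by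
          exact_mod_cast congrArg (Nat.cast (R := ℝ)) he
        rw [pow_succ] at he' ⊢
        have hn' : (n:ℝ) = 2 ^ Nat.log 2 n * 2 - 1 := by linarith [he']
        push_cast
        rw [hn']
        field_simp
        ring

private lemma psi_le_logb (N : ℕ) : psi N ≤ Real.logb 2 (1 + N) := by
  rcases Nat.eq_zero_or_pos N with rfl | hN
  · simp [psi]
  · have hk := psi_closed N hN
    set k := Nat.log 2 N with hkdef
    have hlow : 2 ^ k ≤ N := Nat.pow_log_le_self 2 (by omega)
    have hhigh : N < 2 ^ (k + 1) := Nat.lt_pow_succ_log_self (by norm_num) N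
    have hpos : (0:ℝ) < 2 ^ k := by positivity
    set u : ℝ := ((N:ℝ) + 1) / 2 ^ k with hu
    have hu1 : 1 ≤ u := by
      rw [hu, le_div_iff₀ hpos]
      have : (2:ℝ) ^ k ≤ N := by exact_mod_cast hlow
      linarith
    have hu2 : u ≤ 2 := by
      rw [hu, div_le_iff₀ hpos]
      have : (N:ℝ) < 2 ^ (k+1) := by exact_mod_cast hhigh
      rw [pow_succ] at this
      have : (N:ℝ) + 1 ≤ 2 ^ k * 2 := by
        have hN2 : (N:ℕ) + 1 ≤ 2 ^ (k+1) := hhigh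
        have : ((N:ℝ)) + 1 ≤ (2:ℝ) ^ (k+1) := by exact_mod_cast hN2
        rw [pow_succ] at this; linarith
      linarith
    -- 2 ^ (u - 1) ≤ u
    have hle : (2:ℝ) ^ (u - 1) ≤ u := by
      have := two_rpow_le_one_add (u - 1) (by linarith) (by linarith)
      calc (2:ℝ) ^ (u-1) ≤ 1 + (u - 1) := this
        _ = u := by ring
    have hlogu : u - 1 ≤ Real.logb 2 u := by
      have h1 : Real.logb 2 ((2:ℝ) ^ (u-1)) = u - 1 := Real.logb_rpow (by norm_num) (by norm_num)
      calc u - 1 = Real.logb 2 ((2:ℝ) ^ (u-1)) := h1.symm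
        _ ≤ Real.logb 2 u := Real.logb_le_logb_of_le (by norm_num)
            (Real.rpow_pos_of_pos two_pos _) hle
    -- logb 2 (1+N) = k + logb 2 u
    have hsplit : Real.logb 2 (1 + (N:ℝ)) = k + Real.logb 2 u := by
      have : (1:ℝ) + N = u * 2 ^ k := by
        rw [hu]; field_simp; ring
      rw [this, Real.logb_mul (by positivity) (by positivity), Real.logb_pow]
      simp [Real.logb_self_eq_one (by norm_num : (1:ℝ) < 2)]
      ring
    rw [hk, hsplit]
    have : ((N:ℝ) + 1 - 2 ^ k) / 2 ^ k = u - 1 := by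
      rw [hu]; field_simp
    rw [this]
    push_cast
    linarith

private lemma kraft_bound (F : Finset (List Bool)) :
    ∑ w ∈ F, ((2:ℝ) ^ w.length)⁻¹ ≤ Real.logb 2 (1 + F.card) :=
  (kraft_le_psi F).trans (psi_le_logb F.card)


private lemma holder_sum {ι : Type*} (s : Finset ι) (M b : ι → ℝ)
    (hM : ∀ i ∈ s, 0 ≤ M i) (hb : ∀ i ∈ s, 0 < b i) {t : ℝ} (ht : 0 < t)
    (hbs : 0 < ∑ i ∈ s, b i) :
    ∑ i ∈ s, M i ^ (1/(1+t)) * b i ^ (1 - 1/(1+t)) ≤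
      (∑ i ∈ s, M i) ^ (1/(1+t)) * (∑ i ∈ s, b i) ^ (1 - 1/(1+t)) := by
  have h1t : (0:ℝ) < 1 + t := by linarith
  set α : ℝ := 1/(1+t) with hα
  have hα0 : 0 < α := by positivity
  set Bs : ℝ := ∑ i ∈ s, b i with hBs
  have key := Real.arith_mean_le_rpow_mean s (fun i => b i / Bs)
    (fun i => (M i / b i) ^ α)
    (fun i hi => div_nonneg (hb i hi).le hbs.le)
    (by rw [← Finset.sum_div, div_self hbs.ne'])
    (fun i hi => Real.rpow_nonneg (div_nonneg (hM i hi) (hb i hi).le) _)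
    (p := 1 + t) (by linarith)
  have e1 : ∑ i ∈ s, b i / Bs * (M i / b i) ^ α
      = (∑ i ∈ s, M i ^ α * b i ^ (1-α)) / Bs := by
    rw [Finset.sum_div]
    refine Finset.sum_congr rfl fun i hi => ?_
    have hbi := hb i hi
    have hMi := hM i hi
    rw [Real.div_rpow hMi hbi.le, Real.rpow_sub hbi 1 α, Real.rpow_one]
    field_simp
  have e2 : ∑ i ∈ s, b i / Bs * ((M i / b i) ^ α) ^ (1+t)
      = (∑ i ∈ s, M i) / Bs := by
    rw [Finset.sum_div]
    refine Finset.sum_congr rfl fun i hi => ?_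
    have hbi := hb i hi
    have hMi := hM i hi
    rw [← Real.rpow_mul (div_nonneg hMi hbi.le)]
    have : α * (1 + t) = 1 := by
      rw [hα]; field_simp
    rw [this, Real.rpow_one]
    field_simp
  simp only [e1, e2] at key
  -- key : (∑ M^α b^(1-α)) / Bs ≤ ((∑ M) / Bs) ^ (1/(1+t))
  have hMs : 0 ≤ ∑ i ∈ s, M i := Finset.sum_nonneg hM
  have h3 : ((∑ i ∈ s, M i) / Bs) ^ (1/(1+t)) = (∑ i ∈ s, M i) ^ α / Bs ^ α := by
    rw [← hα, Real.div_rpow hMs hbs.le]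
  rw [h3] at key
  have h4 := mul_le_mul_of_nonneg_left key hbs.le
  rw [mul_div_cancel₀ _ hbs.ne'] at h4
  calc ∑ i ∈ s, M i ^ α * b i ^ (1-α)
      ≤ Bs * ((∑ i ∈ s, M i) ^ α / Bs ^ α) := h4
    _ = (∑ i ∈ s, M i) ^ α * Bs ^ (1-α) := by
        rw [Real.rpow_sub hbs 1 α, Real.rpow_one]
        ring

/-- Converse. For a finite source `X` with pmf `p` on `𝒳`, finite `𝒴`,
`D ≥ 0`, `ε ∈ [0,1)`, `t > 0`, any variable-length code with a stochastic encoder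
`f` (supported on a finite set `W` of binary codewords), a decoder `g` injective on
`W`, and excess distortion probability `P[d(X, g(f(X))) > D] ≤ ε`, must satisfy
`(1/t)·log₂ E[2^{t·ℓ(f(X))}] ≥ G^{D,ε}_{1/(1+t)}(X) − log₂ log₂(1 + min(|𝒳|,|𝒴|))`:
namely there exists a feasible conditional distribution `Q` with
`P[d(X,Y) > D] ≤ ε` whose output Rényi entropy lower bounds the cumulant
generating function up to the `log log` term. -/
theorem lossy_converse {𝒳 𝒴 : Type*} [Fintype 𝒳] [Fintype 𝒴] [Nonempty 𝒴]
    (p : 𝒳 → ℝ) (hp : ∀ x, 0 ≤ p x) (hpsum : ∑ x, p x = 1)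
    (d : 𝒳 → 𝒴 → ℝ) (hd : ∀ x y, 0 ≤ d x y)
    (D : ℝ) (hD : 0 ≤ D) (ε : ℝ) (hε0 : 0 ≤ ε) (hε1 : ε < 1)
    (t : ℝ) (ht : 0 < t)
    (W : Finset (List Bool)) (f : 𝒳 → List Bool → ℝ) (g : List Bool → 𝒴)
    (hf0 : ∀ x w, 0 ≤ f x w)
    (hfW : ∀ x, ∀ w ∉ W, f x w = 0)
    (hf1 : ∀ x, ∑ w ∈ W, f x w = 1)
    (hginj : Set.InjOn g (W : Set (List Bool)))
    (hexcess : (∑ x, p x * ∑ w ∈ W.filter (fun w => D < d x (g w)), f x w) ≤ ε) :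
    ∃ Q : 𝒳 → 𝒴 → ℝ,
      (∀ x y, 0 ≤ Q x y) ∧ (∀ x, ∑ y, Q x y = 1) ∧
      (∑ x, p x * ∑ y ∈ Finset.univ.filter (fun y => D < d x y), Q x y) ≤ ε ∧
      (1 / t) * Real.logb 2
          (∑ x, p x * ∑ w ∈ W, f x w * (2 : ℝ) ^ (t * (w.length : ℝ)))
        ≥ ((1 + t) / t) *
            Real.logb 2 (∑ y, (∑ x, p x * Q x y) ^ (1 / (1 + t)))
          - Real.logb 2
              (Real.logb 2 (1 + (min (Fintype.card 𝒳) (Fintype.card 𝒴) : ℝ))) := by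
  classical
  have h1t : (0:ℝ) < 1 + t := by linarith
  have hXne : Nonempty 𝒳 := by
    by_contra h
    rw [not_nonempty_iff] at h
    rw [Finset.univ_eq_empty, Finset.sum_empty] at hpsum
    exact one_ne_zero hpsum.symm
  obtain ⟨x0⟩ := hXne
  haveI : Nonempty 𝒳 := ⟨x0⟩
  have hWne : W.Nonempty := by
    rcases Finset.eq_empty_or_nonempty W with h | h
    · exfalso; have h1 := hf1 x0; rw [h, Finset.sum_empty] at h1; exact one_ne_zero h1.symm
    · exact h
  obtain ⟨w0, hw0W, hw0min⟩ := W.exists_min_image List.length hWne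
  set good : 𝒳 → Finset (List Bool) := fun x => W.filter (fun w => ¬ D < d x (g w)) with hgood
  set a : 𝒳 → ℝ := fun x => ∑ w ∈ good x, f x w with ha
  have ha0 : ∀ x, 0 ≤ a x := fun x => Finset.sum_nonneg fun w _ => hf0 x w
  have ha1 : ∀ x, a x ≤ 1 := by
    intro x
    calc a x ≤ ∑ w ∈ W, f x w :=
          Finset.sum_le_sum_of_subset_of_nonneg (Finset.filter_subset _ _)
            (fun w _ _ => hf0 x w)
      _ = 1 := hf1 x
  have hbadsum : ∀ x, ∑ w ∈ W.filter (fun w => D < d x (g w)), f x w = 1 - a x := by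
    intro x
    have h2 := Finset.sum_filter_add_sum_filter_not W (fun w => D < d x (g w)) (f x)
    rw [hf1 x] at h2
    have h3 : a x = ∑ w ∈ W.filter (fun w => ¬ D < d x (g w)), f x w := rfl
    linarith [h2, h3.ge, h3.le]
  have hex2 : ∑ x, p x * (1 - a x) ≤ ε := by
    calc ∑ x, p x * (1 - a x)
        = ∑ x, p x * ∑ w ∈ W.filter (fun w => D < d x (g w)), f x w :=
          Finset.sum_congr rfl fun x _ => by rw [hbadsum x]
      _ ≤ ε := hexcess
  -- choose minimal-length good codewords
  have hchoice : ∀ x, (good x).Nonempty →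
      ∃ w, w ∈ good x ∧ ∀ w' ∈ good x, w.length ≤ w'.length := by
    intro x h
    obtain ⟨b, hb, hm⟩ := (good x).exists_min_image List.length h
    exact ⟨b, hb, hm⟩
  choose! wb hwb1 hwb2 using hchoice
  set A : Finset 𝒳 := Finset.univ.filter (fun x => (good x).Nonempty) with hA
  have hA0 : ∀ x, x ∉ A → a x = 0 := by
    intro x hx
    have : ¬ (good x).Nonempty := by
      intro hc; exact hx (Finset.mem_filter.mpr ⟨Finset.mem_univ _, hc⟩)
    rw [Finset.not_nonempty_iff_eq_empty] at this
    show ∑ w ∈ good x, f x w = 0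
    rw [this, Finset.sum_empty]
  have hAne : A.Nonempty := by
    by_contra h
    rw [Finset.not_nonempty_iff_eq_empty] at h
    have hz : ∀ x : 𝒳, a x = 0 := fun x => hA0 x (by rw [h]; exact Finset.notMem_empty x)
    have : (1:ℝ) ≤ ε := by
      calc (1:ℝ) = ∑ x, p x := hpsum.symm
        _ = ∑ x, p x * (1 - a x) := Finset.sum_congr rfl fun x _ => by rw [hz x]; ring
        _ ≤ ε := hex2
    linarith
  have hwbA : ∀ x ∈ A, wb x ∈ good x := fun x hx => hwb1 x (Finset.mem_filter.mp hx).2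
  have hgoodW : ∀ x, good x ⊆ W := fun x => Finset.filter_subset _ _
  have hwbW : ∀ x ∈ A, wb x ∈ W := fun x hx => hgoodW x (hwbA x hx)
  set V : Finset (List Bool) := A.image wb with hV
  have hVne : V.Nonempty := hAne.image wb
  have hVW : ∀ w ∈ V, w ∈ W := by
    intro w hw
    obtain ⟨x, hx, rfl⟩ := Finset.mem_image.mp hw
    exact hwbW x hx
  set wt : List Bool := if w0 ∈ V then w0 else hVne.choose with hwt
  have hwtV : wt ∈ V := by
    rw [hwt]; split
    · assumption
    · exact hVne.choose_spec
  have hwtW : wt ∈ W := hVW wt hwtV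
  have hw0not : w0 ∉ V.erase wt := by
    by_cases h : w0 ∈ V
    · rw [hwt, if_pos h]; exact Finset.notMem_erase _ _
    · intro hc; exact h (Finset.mem_of_mem_erase hc)
  set Q : 𝒳 → 𝒴 → ℝ := fun x y =>
    a x * (if y = g (wb x) then 1 else 0) + (1 - a x) * (if y = g wt then 1 else 0) with hQ
  have hQ0 : ∀ x y, 0 ≤ Q x y := by
    intro x y
    have h1 := ha0 x
    have h2 := ha1 x
    show 0 ≤ a x * (if y = g (wb x) then 1 else 0) + (1 - a x) * (if y = g wt then 1 else 0)
    split_ifs <;> nlinarith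
  have hQ1 : ∀ x, ∑ y, Q x y = 1 := by
    intro x
    show ∑ y, (a x * (if y = g (wb x) then 1 else 0)
        + (1 - a x) * (if y = g wt then 1 else 0)) = 1
    rw [Finset.sum_add_distrib, ← Finset.mul_sum, ← Finset.mul_sum]
    rw [Finset.sum_ite_eq' Finset.univ (g (wb x)) (fun _ => (1:ℝ)),
        Finset.sum_ite_eq' Finset.univ (g wt) (fun _ => (1:ℝ))]
    simp
  have hQex : (∑ x, p x * ∑ y ∈ Finset.univ.filter (fun y => D < d x y), Q x y) ≤ ε := by
    refine le_trans ?_ hex2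
    refine Finset.sum_le_sum fun x _ => ?_
    refine mul_le_mul_of_nonneg_left ?_ (hp x)
    show ∑ y ∈ Finset.univ.filter (fun y => D < d x y),
        (a x * (if y = g (wb x) then 1 else 0)
          + (1 - a x) * (if y = g wt then 1 else 0)) ≤ 1 - a x
    rw [Finset.sum_add_distrib, ← Finset.mul_sum, ← Finset.mul_sum]
    rw [Finset.sum_ite_eq' _ (g (wb x)) (fun _ => (1:ℝ)),
        Finset.sum_ite_eq' _ (g wt) (fun _ => (1:ℝ))]
    have h2 := ha1 x
    have h1 := ha0 x
    by_cases hx : x ∈ A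
    · have hgd : ¬ D < d x (g (wb x)) := (Finset.mem_filter.mp (hwbA x hx)).2
      rw [if_neg (by simp [hgd])]
      split_ifs <;> simp <;> nlinarith
    · have hz : a x = 0 := hA0 x hx
      rw [hz]
      split_ifs <;> simp
  refine ⟨Q, hQ0, hQ1, hQex, ?_⟩
  -- main inequality
  set α : ℝ := 1 / (1 + t) with hα
  have hα0 : 0 < α := by positivity
  have hα1 : α < 1 := by
    rw [hα, div_lt_one h1t]; linarith
  have htα : t * α = 1 - α := by
    rw [hα]; field_simp; ring
  set E : ℝ := ∑ x, p x * ∑ w ∈ W, f x w * (2 : ℝ) ^ (t * (w.length : ℝ)) with hE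
  set R : ℝ := ∑ y, (∑ x, p x * Q x y) ^ α with hR
  set K0 : ℝ := Real.logb 2 (1 + (min (Fintype.card 𝒳) (Fintype.card 𝒴) : ℝ)) with hK0
  have hpow1 : ∀ l : ℕ, (1:ℝ) ≤ (2:ℝ) ^ (t * (l:ℝ)) := by
    intro l
    calc (1:ℝ) = (2:ℝ) ^ (0:ℝ) := (Real.rpow_zero 2).symm
      _ ≤ (2:ℝ) ^ (t * (l:ℝ)) :=
        Real.rpow_le_rpow_of_exponent_le one_le_two (by positivity)
  have hpowmono : ∀ l1 l2 : ℕ, l1 ≤ l2 →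
      (2:ℝ) ^ (t * (l1:ℝ)) ≤ (2:ℝ) ^ (t * (l2:ℝ)) := by
    intro l1 l2 h
    exact Real.rpow_le_rpow_of_exponent_le one_le_two
      (mul_le_mul_of_nonneg_left (Nat.cast_le.mpr h) ht.le)
  have hE1 : 1 ≤ E := by
    rw [hE, ← hpsum]
    refine Finset.sum_le_sum fun x _ => ?_
    refine le_mul_of_one_le_right (hp x) ?_
    calc (1:ℝ) = ∑ w ∈ W, f x w := (hf1 x).symm
      _ ≤ ∑ w ∈ W, f x w * (2:ℝ) ^ (t * (w.length:ℝ)) :=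
          Finset.sum_le_sum fun w _ =>
            le_mul_of_one_le_right (hf0 x w) (hpow1 w.length)
  have hEpos : 0 < E := lt_of_lt_of_le one_pos hE1
  have hPy0 : ∀ y, 0 ≤ ∑ x, p x * Q x y :=
    fun y => Finset.sum_nonneg fun x _ => mul_nonneg (hp x) (hQ0 x y)
  have hPsum1 : ∑ y, ∑ x, p x * Q x y = 1 := by
    rw [Finset.sum_comm]
    calc ∑ x, ∑ y, p x * Q x y = ∑ x, p x * ∑ y, Q x y := by
          refine Finset.sum_congr rfl fun x _ => ?_
          exact (Finset.mul_sum Finset.univ (fun y => Q x y) (p x)).symm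
      _ = ∑ x, p x := Finset.sum_congr rfl fun x _ => by rw [hQ1 x, mul_one]
      _ = 1 := hpsum
  set B : ℝ := ∑ x, p x * (1 - a x) with hB
  have hB0 : 0 ≤ B :=
    Finset.sum_nonneg fun x _ => mul_nonneg (hp x) (by linarith [ha1 x])
  set G : List Bool → ℝ :=
    fun w => ∑ x, p x * a x * (if g w = g (wb x) then 1 else 0) with hG
  have hG0 : ∀ w, 0 ≤ G w := by
    intro w
    refine Finset.sum_nonneg fun x _ => ?_
    have := hp x; have := ha0 x
    split_ifs <;> nlinarith
  have hPg : ∀ w ∈ V, (∑ x, p x * Q x (g w)) = G w + (if w = wt then B else 0) := by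
    intro w hw
    have hiff : (g w = g wt) ↔ (w = wt) :=
      ⟨fun h => hginj (hVW w hw) hwtW h, fun h => by rw [h]⟩
    calc ∑ x, p x * Q x (g w)
        = ∑ x, (p x * a x * (if g w = g (wb x) then 1 else 0)
            + p x * (1 - a x) * (if g w = g wt then 1 else 0)) := by
          refine Finset.sum_congr rfl fun x _ => ?_
          show p x * (a x * _ + (1 - a x) * _) = _
          ring
      _ = G w + (∑ x, p x * (1 - a x)) * (if g w = g wt then 1 else 0) := by
          rw [Finset.sum_add_distrib, ← Finset.sum_mul]
      _ = G w + (if w = wt then B else 0) := by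
          rw [if_congr hiff rfl rfl]
          split_ifs <;> simp [hB]
  have hPT : ∀ y, y ∉ V.image g → (∑ x, p x * Q x y) = 0 := by
    intro y hy
    refine Finset.sum_eq_zero fun x _ => ?_
    have h2 : (if y = g wt then (1:ℝ) else 0) = 0 := by
      rw [if_neg]; intro hc
      exact hy (by rw [hc]; exact Finset.mem_image_of_mem g hwtV)
    by_cases hx : x ∈ A
    · have h1 : (if y = g (wb x) then (1:ℝ) else 0) = 0 := by
        rw [if_neg]; intro hc
        refine hy (by rw [hc]; exact Finset.mem_image_of_mem g (Finset.mem_image_of_mem wb hx))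
      show p x * (a x * _ + (1 - a x) * _) = 0
      rw [h1, h2]; ring
    · have hz : a x = 0 := hA0 x hx
      show p x * (a x * _ + (1 - a x) * _) = 0
      rw [hz, h2]; ring
  have hRV : R = ∑ w ∈ V, (∑ x, p x * Q x (g w)) ^ α := by
    rw [hR]
    rw [← Finset.sum_subset (Finset.subset_univ (V.image g))
      (fun y _ hy => by rw [hPT y hy, Real.zero_rpow (ne_of_gt hα0)])]
    rw [Finset.sum_image (fun w hw w' hw' h => hginj (hVW w hw) (hVW w' hw') h)]
  set M : List Bool → ℝ := fun w => G w * (2:ℝ) ^ (t * (w.length:ℝ))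
    + (if w = wt then B * (2:ℝ) ^ (t * (w0.length:ℝ)) else 0) with hM
  have hM0 : ∀ w, 0 ≤ M w := by
    intro w
    refine add_nonneg (mul_nonneg (hG0 w) (by positivity)) ?_
    split_ifs
    · exact mul_nonneg hB0 (by positivity)
    · exact le_rfl
  set bb : List Bool → ℝ := fun w =>
    if w = wt then ((2:ℝ) ^ w0.length)⁻¹ else ((2:ℝ) ^ w.length)⁻¹ with hbb
  have hbb0 : ∀ w, 0 < bb w := by
    intro w
    rw [hbb]
    dsimp only
    split_ifs <;> positivity
  have hinv_rpow : ∀ l : ℕ, ((2:ℝ) ^ l)⁻¹ = (2:ℝ) ^ (-(l:ℝ)) := by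
    intro l
    rw [← Real.rpow_natCast 2 l, ← Real.rpow_neg (by norm_num)]
  have hprod1 : ∀ l : ℕ, (2:ℝ) ^ (t * (l:ℝ)) * (((2:ℝ) ^ l)⁻¹) ^ t = 1 := by
    intro l
    rw [hinv_rpow l, ← Real.rpow_mul (by norm_num : (0:ℝ) ≤ 2),
      ← Real.rpow_add (by norm_num : (0:ℝ) < 2)]
    rw [show t * (l:ℝ) + -(l:ℝ) * t = 0 by ring, Real.rpow_zero]
  have hkey : ∀ w ∈ V, (∑ x, p x * Q x (g w)) ≤ M w * bb w ^ t := by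
    intro w hw
    rw [hPg w hw]
    have hwW := hVW w hw
    by_cases hwwt : w = wt
    · simp only [hM, hbb, if_pos hwwt]
      have hXZ : 1 ≤ (2:ℝ) ^ (t * (w.length:ℝ)) * (((2:ℝ) ^ w0.length)⁻¹) ^ t := by
        rw [hinv_rpow, ← Real.rpow_mul (by norm_num : (0:ℝ) ≤ 2),
          ← Real.rpow_add (by norm_num : (0:ℝ) < 2)]
        calc (1:ℝ) = (2:ℝ) ^ (0:ℝ) := (Real.rpow_zero 2).symm
          _ ≤ _ := by
            refine Real.rpow_le_rpow_of_exponent_le one_le_two ?_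
            have hlen : (w0.length : ℝ) ≤ (w.length : ℝ) :=
              Nat.cast_le.mpr (hw0min w hwW)
            nlinarith
      have hYZ := hprod1 w0.length
      have hGw := hG0 w
      nlinarith [mul_nonneg hGw (sub_nonneg.mpr hXZ)]
    · simp only [hM, hbb, if_neg hwwt]
      rw [add_zero, add_zero]
      have heq1 : G w * (2:ℝ) ^ (t * (w.length:ℝ)) * (((2:ℝ) ^ w.length)⁻¹) ^ t = G w := by
        rw [mul_assoc, hprod1 w.length, mul_one]
      rw [heq1]
  have hkeyα : ∀ w ∈ V, (∑ x, p x * Q x (g w)) ^ α ≤ M w ^ α * bb w ^ (1 - α) := by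
    intro w hw
    have h1 : (∑ x, p x * Q x (g w)) ^ α ≤ (M w * bb w ^ t) ^ α :=
      Real.rpow_le_rpow (hPy0 (g w)) (hkey w hw) hα0.le
    rw [Real.mul_rpow (hM0 w) (Real.rpow_nonneg (hbb0 w).le t)] at h1
    rw [← Real.rpow_mul (hbb0 w).le, htα] at h1
    exact h1
  -- sum of budgets is at most E
  have hwbV : ∀ x ∈ A, wb x ∈ V := fun x hx => Finset.mem_image_of_mem wb hx
  have hinner : ∀ x, a x ≠ 0 →
      ∑ w ∈ V, (if g w = g (wb x) then (1:ℝ) else 0) * (2:ℝ) ^ (t * (w.length:ℝ))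
        = (2:ℝ) ^ (t * ((wb x).length:ℝ)) := by
    intro x hax
    have hxA : x ∈ A := by
      by_contra hc
      exact hax (hA0 x hc)
    have : ∀ w ∈ V, (if g w = g (wb x) then (1:ℝ) else 0) * (2:ℝ) ^ (t * (w.length:ℝ))
        = if w = wb x then (2:ℝ) ^ (t * (w.length:ℝ)) else 0 := by
      intro w hw
      have hiff : (g w = g (wb x)) ↔ (w = wb x) :=
        ⟨fun h => hginj (hVW w hw) (hwbW x hxA) h, fun h => by rw [h]⟩
      rw [if_congr hiff rfl rfl]
      split_ifs <;> ring
    rw [Finset.sum_congr rfl this, Finset.sum_ite_eq' V (wb x)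
      (fun w => (2:ℝ) ^ (t * (w.length:ℝ))), if_pos (hwbV x hxA)]
  have hEx : ∀ x, a x * (2:ℝ) ^ (t * ((wb x).length:ℝ))
      + (1 - a x) * (2:ℝ) ^ (t * (w0.length:ℝ))
      ≤ ∑ w ∈ W, f x w * (2:ℝ) ^ (t * (w.length:ℝ)) := by
    intro x
    rw [← Finset.sum_filter_add_sum_filter_not W (fun w => D < d x (g w))
      (fun w => f x w * (2:ℝ) ^ (t * (w.length:ℝ)))]
    rw [add_comm (a x * _)]
    refine add_le_add ?_ ?_
    · -- bad part
      rw [← hbadsum x, Finset.sum_mul]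
      refine Finset.sum_le_sum fun w hw => ?_
      have hwW : w ∈ W := Finset.mem_of_mem_filter w hw
      exact mul_le_mul_of_nonneg_left (hpowmono _ _ (hw0min w hwW)) (hf0 x w)
    · -- good part
      by_cases hxA : x ∈ A
      · have hax : a x = ∑ w ∈ good x, f x w := rfl
        rw [hax, Finset.sum_mul]
        refine Finset.sum_le_sum fun w hw => ?_
        exact mul_le_mul_of_nonneg_left
          (hpowmono _ _ (hwb2 x (Finset.mem_filter.mp hxA).2 w hw)) (hf0 x w)
      · rw [hA0 x hxA, zero_mul]
        refine Finset.sum_nonneg fun w _ => ?_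
        exact mul_nonneg (hf0 x w) (by positivity)
  have hMsum : ∑ w ∈ V, M w ≤ E := by
    have e1 : ∑ w ∈ V, M w
        = (∑ x, p x * a x *
            ∑ w ∈ V, (if g w = g (wb x) then (1:ℝ) else 0) * (2:ℝ) ^ (t * (w.length:ℝ)))
          + B * (2:ℝ) ^ (t * (w0.length:ℝ)) := by
      rw [hM]
      rw [Finset.sum_add_distrib]
      congr 1
      · calc ∑ w ∈ V, G w * (2:ℝ) ^ (t * (w.length:ℝ))
            = ∑ w ∈ V, ∑ x, p x * a x * (if g w = g (wb x) then (1:ℝ) else 0)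
                * (2:ℝ) ^ (t * (w.length:ℝ)) := by
              refine Finset.sum_congr rfl fun w _ => ?_
              rw [hG, Finset.sum_mul]
          _ = ∑ x, ∑ w ∈ V, p x * a x * (if g w = g (wb x) then (1:ℝ) else 0)
                * (2:ℝ) ^ (t * (w.length:ℝ)) := Finset.sum_comm
          _ = ∑ x, p x * a x *
                ∑ w ∈ V, (if g w = g (wb x) then (1:ℝ) else 0)
                  * (2:ℝ) ^ (t * (w.length:ℝ)) := by
              refine Finset.sum_congr rfl fun x _ => ?_
              rw [Finset.mul_sum V (fun w => (if g w = g (wb x) then (1:ℝ) else 0)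
                * (2:ℝ) ^ (t * (w.length:ℝ))) (p x * a x)]
              exact Finset.sum_congr rfl fun w _ => by ring
      · rw [Finset.sum_ite_eq' V wt
          (fun _ => B * (2:ℝ) ^ (t * (w0.length:ℝ))), if_pos hwtV]
    rw [e1]
    have e2 : ∀ x : 𝒳, p x * a x *
        (∑ w ∈ V, (if g w = g (wb x) then (1:ℝ) else 0) * (2:ℝ) ^ (t * (w.length:ℝ)))
        ≤ p x * (a x * (2:ℝ) ^ (t * ((wb x).length:ℝ))) := by
      intro x
      by_cases hax : a x = 0
      · rw [hax]; simp
      · rw [hinner x hax]; ring_nf; exact le_rfl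
    calc (∑ x, p x * a x *
            ∑ w ∈ V, (if g w = g (wb x) then (1:ℝ) else 0) * (2:ℝ) ^ (t * (w.length:ℝ)))
          + B * (2:ℝ) ^ (t * (w0.length:ℝ))
        ≤ (∑ x, p x * (a x * (2:ℝ) ^ (t * ((wb x).length:ℝ))))
          + B * (2:ℝ) ^ (t * (w0.length:ℝ)) := by
          exact add_le_add (Finset.sum_le_sum fun x _ => e2 x) le_rfl
      _ = ∑ x, (p x * (a x * (2:ℝ) ^ (t * ((wb x).length:ℝ)))
            + p x * ((1 - a x) * (2:ℝ) ^ (t * (w0.length:ℝ)))) := by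
          rw [hB, Finset.sum_mul, ← Finset.sum_add_distrib]
          exact Finset.sum_congr rfl fun x _ => by ring
      _ ≤ ∑ x, p x * ∑ w ∈ W, f x w * (2:ℝ) ^ (t * (w.length:ℝ)) := by
          refine Finset.sum_le_sum fun x _ => ?_
          calc p x * (a x * (2:ℝ) ^ (t * ((wb x).length:ℝ)))
                + p x * ((1 - a x) * (2:ℝ) ^ (t * (w0.length:ℝ)))
              = p x * (a x * (2:ℝ) ^ (t * ((wb x).length:ℝ))
                  + (1 - a x) * (2:ℝ) ^ (t * (w0.length:ℝ))) := by ring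
            _ ≤ p x * ∑ w ∈ W, f x w * (2:ℝ) ^ (t * (w.length:ℝ)) :=
                mul_le_mul_of_nonneg_left (hEx x) (hp x)
      _ = E := by rw [hE]
  -- Kraft bound on sum of bb
  have hbbsum : ∑ w ∈ V, bb w ≤ K0 := by
    have e1 : ∑ w ∈ V, bb w
        = ∑ w ∈ insert w0 (V.erase wt), ((2:ℝ) ^ w.length)⁻¹ := by
      rw [Finset.sum_insert hw0not, ← Finset.add_sum_erase V bb hwtV]
      congr 1
      · show (if wt = wt then ((2:ℝ) ^ w0.length)⁻¹ else ((2:ℝ) ^ wt.length)⁻¹) = _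
        rw [if_pos rfl]
      · refine Finset.sum_congr rfl fun w hw => ?_
        show (if w = wt then ((2:ℝ) ^ w0.length)⁻¹ else ((2:ℝ) ^ w.length)⁻¹) = _
        rw [if_neg (Finset.ne_of_mem_erase hw)]
    have e2 : (insert w0 (V.erase wt)).card = V.card := by
      rw [Finset.card_insert_of_notMem hw0not, Finset.card_erase_of_mem hwtV]
      have := Finset.card_pos.mpr hVne
      omega
    have hc1 : V.card ≤ Fintype.card 𝒳 := by
      calc V.card ≤ A.card := Finset.card_image_le
        _ ≤ Fintype.card 𝒳 := by
          rw [← Finset.card_univ]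
          exact Finset.card_le_card (Finset.subset_univ A)
    have hc2 : V.card ≤ Fintype.card 𝒴 := by
      calc V.card ≤ W.card := Finset.card_le_card (fun w hw => hVW w hw)
        _ ≤ Fintype.card 𝒴 := by
          rw [← Finset.card_univ]
          exact Finset.card_le_card_of_injOn g (fun w _ => Finset.mem_univ _) hginj
    calc ∑ w ∈ V, bb w ≤ Real.logb 2 (1 + (insert w0 (V.erase wt)).card) := by
          rw [e1]; exact kraft_bound _
      _ ≤ K0 := by
          rw [e2, hK0]
          refine Real.logb_le_logb_of_le one_lt_two
            (by have h0 : (0:ℝ) ≤ (V.card:ℝ) := Nat.cast_nonneg _; linarith) ?_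
          have h2 : ((V.card:ℕ) : ℝ) ≤ ((min (Fintype.card 𝒳) (Fintype.card 𝒴) : ℕ) : ℝ) :=
            Nat.cast_le.mpr (le_min hc1 hc2)
          rw [Nat.cast_min] at h2
          linarith
  have hbbpos : 0 < ∑ w ∈ V, bb w :=
    Finset.sum_pos (fun w _ => hbb0 w) hVne
  have hK0pos : 0 < K0 := by
    rw [hK0]
    refine Real.logb_pos one_lt_two ?_
    have h1 : 1 ≤ min (Fintype.card 𝒳) (Fintype.card 𝒴) :=
      le_min Fintype.card_pos Fintype.card_pos
    have : (1:ℝ) ≤ (min (Fintype.card 𝒳) (Fintype.card 𝒴) : ℝ) := by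
      exact_mod_cast h1
    linarith
  -- the chain
  have hchain : R ≤ E ^ α * K0 ^ (1 - α) := by
    calc R = ∑ w ∈ V, (∑ x, p x * Q x (g w)) ^ α := hRV
      _ ≤ ∑ w ∈ V, M w ^ α * bb w ^ (1 - α) := Finset.sum_le_sum hkeyα
      _ ≤ (∑ w ∈ V, M w) ^ α * (∑ w ∈ V, bb w) ^ (1 - α) := by
          rw [hα]
          exact holder_sum V M bb (fun w _ => hM0 w) (fun w _ => hbb0 w) ht hbbpos
      _ ≤ E ^ α * K0 ^ (1 - α) := by
          refine mul_le_mul ?_ ?_ (Real.rpow_nonneg hbbpos.le _) (Real.rpow_nonneg hEpos.le _)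
          · exact Real.rpow_le_rpow (Finset.sum_nonneg fun w _ => hM0 w) hMsum hα0.le
          · exact Real.rpow_le_rpow hbbpos.le hbbsum (by linarith)
  have hRpos : 0 < R := by
    obtain ⟨y1, hy1⟩ := Finset.exists_ne_zero_of_sum_ne_zero
      (hPsum1 ▸ one_ne_zero)
    have hy1pos : 0 < ∑ x, p x * Q x y1 := lt_of_le_of_ne (hPy0 y1) (Ne.symm hy1.2)
    calc (0:ℝ) < (∑ x, p x * Q x y1) ^ α := Real.rpow_pos_of_pos hy1pos α
      _ ≤ R := Finset.single_le_sum
          (fun y _ => Real.rpow_nonneg (hPy0 y) α) (Finset.mem_univ y1)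
  have hlog : Real.logb 2 R ≤ α * Real.logb 2 E + (1 - α) * Real.logb 2 K0 := by
    calc Real.logb 2 R ≤ Real.logb 2 (E ^ α * K0 ^ (1 - α)) :=
          Real.logb_le_logb_of_le one_lt_two hRpos hchain
      _ = α * Real.logb 2 E + (1 - α) * Real.logb 2 K0 := by
          rw [Real.logb_mul (ne_of_gt (Real.rpow_pos_of_pos hEpos α))
            (ne_of_gt (Real.rpow_pos_of_pos hK0pos (1 - α))),
            Real.logb_rpow_eq_mul_logb_of_pos hEpos,
            Real.logb_rpow_eq_mul_logb_of_pos hK0pos]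
  rw [ge_iff_le]
  have hmul := mul_le_mul_of_nonneg_left hlog (le_of_lt (div_pos h1t ht))
  have heq : (1 + t) / t * (α * Real.logb 2 E + (1 - α) * Real.logb 2 K0)
      = (1 / t) * Real.logb 2 E + Real.logb 2 K0 := by
    rw [hα]
    field_simp
    ring
  rw [heq] at hmul
  linarith [hmul]
end

section
/- Prefix-code converse: for any prefix-free code (f^p, g^p) with injective decoder satisfying P[d(X, g^p(f^p(X))) > D] ≤ ε, and any t > 0, (1/t)·log₂ E[2^{t·ℓ(f^p(X))}] ≥ G^{D,ε}_{1/(1+t)}(X). -/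
open Real Finset

lemma kraft_ineq (W : Finset (List Bool))
    (hprefix : ∀ w ∈ W, ∀ w' ∈ W, w ≠ w' → ¬ w <+: w') :
    ∑ w ∈ W, (2:ℝ) ^ (-(w.length:ℝ)) ≤ 1 := by
  classical
  set L := W.sup List.length with hLdef
  have hlen : ∀ w ∈ W, w.length ≤ L := fun w hw => Finset.le_sup hw
  set A : List Bool → Finset (List Bool) :=
    fun w => (Finset.univ : Finset (Fin (L - w.length) → Bool)).image
      (fun v => w ++ List.ofFn v) with hA
  have hcardA : ∀ w, (A w).card = 2 ^ (L - w.length) := by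
    intro w
    rw [hA]
    rw [Finset.card_image_of_injective _
      (fun a b hab => List.ofFn_injective (List.append_cancel_left hab))]
    simp
  have hmem : ∀ w, ∀ l ∈ A w, w <+: l ∧ (w.length ≤ L → l.length = L) := by
    intro w l hl
    simp only [hA, Finset.mem_image, Finset.mem_univ, true_and] at hl
    obtain ⟨v, rfl⟩ := hl
    refine ⟨⟨List.ofFn v, rfl⟩, fun h => ?_⟩
    simp [Nat.add_sub_cancel' h]
  have hdisj : ∀ w ∈ W, ∀ w' ∈ W, w ≠ w' → Disjoint (A w) (A w') := by
    intro w hw w' hw' hne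
    rw [Finset.disjoint_left]
    intro l hl hl'
    rcases List.prefix_or_prefix_of_prefix (hmem w l hl).1 (hmem w' l hl').1 with h | h
    · exact hprefix w hw w' hw' hne h
    · exact hprefix w' hw' w hw hne.symm h
  have hsum : ∑ w ∈ W, 2 ^ (L - w.length) = (W.biUnion A).card := by
    rw [Finset.card_biUnion hdisj]
    exact Finset.sum_congr rfl fun w _ => (hcardA w).symm
  have hcard : (W.biUnion A).card ≤ 2 ^ L := by
    have hLl : ∀ l ∈ W.biUnion A, l.length = L := by
      intro l hl
      rcases Finset.mem_biUnion.mp hl with ⟨w, hw, hlw⟩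
      exact (hmem w l hlw).2 (hlen w hw)
    have := Finset.card_le_card_of_injOn (fun l (i : Fin L) => l.getD i false)
      (fun a _ => Finset.mem_univ _) (s := W.biUnion A)
      (t := (Finset.univ : Finset (Fin L → Bool))) ?_
    · simpa using this
    · intro l hl l' hl' h
      apply List.ext_getElem ((hLl l hl).trans (hLl l' hl').symm)
      intro i h1 h2'
      have hi : i < L := (hLl l hl) ▸ h1
      have := congrFun h ⟨i, hi⟩
      simp only at this
      rwa [l.getD_eq_getElem false h1, l'.getD_eq_getElem false h2'] at this
  have hnat : (∑ w ∈ W, 2 ^ (L - w.length)) ≤ 2 ^ L := hsum ▸ hcard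
  have heq : ∑ w ∈ W, (2:ℝ) ^ (-(w.length:ℝ))
      = (∑ w ∈ W, (2:ℕ) ^ (L - w.length) : ℕ) / 2 ^ L := by
    push_cast
    rw [Finset.sum_div]
    refine Finset.sum_congr rfl fun w hw => ?_
    rw [Real.rpow_neg (by norm_num), Real.rpow_natCast]
    rw [eq_div_iff (by positivity), inv_mul_eq_div, div_eq_iff (by positivity),
      ← pow_add, Nat.sub_add_cancel (hlen w hw)]
  rw [heq, div_le_one (by positivity)]
  exact_mod_cast hnat

lemma fiber_sum {ι κ : Type*} (W : Finset ι) (g : ι → κ)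
    (A : Finset κ) (h : ι → ℝ)
    [∀ y : κ, DecidablePred (fun w => g w = y)] [DecidablePred (fun w => g w ∈ A)] :
    ∑ y ∈ A, ∑ w ∈ W.filter (fun w => g w = y), h w
      = ∑ w ∈ W.filter (fun w => g w ∈ A), h w := by
  classical
  simp_rw [Finset.sum_filter]
  rw [Finset.sum_comm]
  refine Finset.sum_congr rfl fun w _ => ?_
  by_cases hgA : g w ∈ A
  · rw [if_pos hgA, Finset.sum_eq_single_of_mem (g w) hgA
      (fun x _ hx => if_neg fun he : g w = x => hx he.symm), if_pos rfl]
  · rw [if_neg hgA, Finset.sum_eq_zero fun x hx => if_neg fun he : g w = x => hgA (he.symm ▸ hx)]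

/-- Prefix-code converse. For any prefix-free code `(f^p, g^p)` with
decoder injective on the codeword set, excess distortion probability
`P[d(X, g^p(f^p(X))) > D] ≤ ε`, and any `t > 0`,
`(1/t)·log₂ E[2^{t·ℓ(f^p(X))}] ≥ G^{D,ε}_{1/(1+t)}(X)`: there is a feasible
conditional distribution `Q` (with `P[d(X,Y) > D] ≤ ε`) whose output Rényi entropy
of order `1/(1+t)` lower bounds the cumulant generating function. -/
theorem lossy_converse_prefix {𝒳 𝒴 : Type*} [Fintype 𝒳] [Fintype 𝒴] [Nonempty 𝒴]
    (p : 𝒳 → ℝ) (hp : ∀ x, 0 ≤ p x) (hpsum : ∑ x, p x = 1)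
    (d : 𝒳 → 𝒴 → ℝ) (hd : ∀ x y, 0 ≤ d x y)
    (D : ℝ) (hD : 0 ≤ D) (ε : ℝ) (hε0 : 0 ≤ ε) (hε1 : ε < 1)
    (t : ℝ) (ht : 0 < t)
    (W : Finset (List Bool)) (f : 𝒳 → List Bool → ℝ) (g : List Bool → 𝒴)
    (hprefix : ∀ w ∈ W, ∀ w' ∈ W, w ≠ w' → ¬ w <+: w')
    (hf0 : ∀ x w, 0 ≤ f x w)
    (hfW : ∀ x, ∀ w ∉ W, f x w = 0)
    (hf1 : ∀ x, ∑ w ∈ W, f x w = 1)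
    (hginj : Set.InjOn g (W : Set (List Bool)))
    (hexcess : (∑ x, p x * ∑ w ∈ W.filter (fun w => D < d x (g w)), f x w) ≤ ε) :
    ∃ Q : 𝒳 → 𝒴 → ℝ,
      (∀ x y, 0 ≤ Q x y) ∧ (∀ x, ∑ y, Q x y = 1) ∧
      (∑ x, p x * ∑ y ∈ Finset.univ.filter (fun y => D < d x y), Q x y) ≤ ε ∧
      (1 / t) * Real.logb 2
          (∑ x, p x * ∑ w ∈ W, f x w * (2 : ℝ) ^ (t * (w.length : ℝ)))
        ≥ ((1 + t) / t) *
            Real.logb 2 (∑ y, (∑ x, p x * Q x y) ^ (1 / (1 + t))) := by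
  classical
  have h1t : (0:ℝ) < 1 + t := by linarith
  set α : ℝ := 1 / (1 + t) with hαdef
  have hα0 : 0 < α := by positivity
  refine ⟨fun x y => ∑ w ∈ W.filter (fun w => g w = y), f x w, ?_, ?_, ?_, ?_⟩
  · intro x y; exact Finset.sum_nonneg fun w _ => hf0 x w
  · intro x
    dsimp only
    rw [fiber_sum]
    rw [show W.filter (fun w => g w ∈ (univ : Finset 𝒴)) = W by
      simp]
    exact hf1 x
  · refine le_trans (le_of_eq ?_) hexcess
    refine Finset.sum_congr rfl fun x _ => ?_
    dsimp only
    congr 1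
    rw [fiber_sum]
    congr 1
    ext w
    simp
  · -- main inequality
    dsimp only
    set q : List Bool → ℝ := fun w => ∑ x, p x * f x w with hqdef
    have hq0 : ∀ w, 0 ≤ q w := fun w =>
      Finset.sum_nonneg fun x _ => mul_nonneg (hp x) (hf0 x w)
    have hqsum : ∑ w ∈ W, q w = 1 := by
      rw [hqdef, Finset.sum_comm]
      simp_rw [← Finset.mul_sum, hf1, mul_one]
      exact hpsum
    -- LHS sum equals ∑ w ∈ W, q w * 2^(t ℓ)
    have hS1 : (∑ x, p x * ∑ w ∈ W, f x w * (2:ℝ) ^ (t * (w.length:ℝ)))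
        = ∑ w ∈ W, q w * (2:ℝ) ^ (t * (w.length:ℝ)) := by
      simp_rw [Finset.mul_sum]
      rw [Finset.sum_comm]
      refine Finset.sum_congr rfl fun w _ => ?_
      rw [hqdef, Finset.sum_mul]
      exact Finset.sum_congr rfl fun x _ => by ring
    -- RHS sum equals ∑ w ∈ W, (q w) ^ α
    have hPY : ∀ y, (∑ x, p x * ∑ w ∈ W.filter (fun w => g w = y), f x w)
        = ∑ w ∈ W.filter (fun w => g w = y), q w := by
      intro y
      simp_rw [Finset.mul_sum]
      rw [Finset.sum_comm]
    have hSα : (∑ y, (∑ x, p x * ∑ w ∈ W.filter (fun w => g w = y), f x w) ^ α)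
        = ∑ w ∈ W, (q w) ^ α := by
      simp_rw [hPY]
      rw [← Finset.sum_subset (Finset.subset_univ (W.image g))]
      · rw [Finset.sum_image (fun a ha b hb hab => hginj ha hb hab)]
        refine Finset.sum_congr rfl fun w hw => ?_
        congr 1
        rw [show W.filter (fun w' => g w' = g w) = {w} from ?_, Finset.sum_singleton]
        ext w'
        simp only [Finset.mem_filter, Finset.mem_singleton]
        constructor
        · rintro ⟨hw', he⟩; exact hginj hw' hw he
        · rintro rfl; exact ⟨hw, rfl⟩
      · intro y _ hy
        rw [show W.filter (fun w => g w = y) = ∅ from ?_]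
        · simp [Real.zero_rpow (ne_of_gt hα0)]
        · rw [Finset.filter_eq_empty_iff]
          intro w hw hgw
          exact hy (hgw ▸ Finset.mem_image_of_mem g hw)
    rw [hS1, hSα]
    set S1 : ℝ := ∑ w ∈ W, q w * (2:ℝ) ^ (t * (w.length:ℝ)) with hS1def
    set Sα : ℝ := ∑ w ∈ W, (q w) ^ α with hSαdef
    have hpow1 : ∀ w : List Bool, (1:ℝ) ≤ (2:ℝ) ^ (t * (w.length:ℝ)) := by
      intro w
      apply Real.one_le_rpow (by norm_num)
      positivity
    have hS1ge : 1 ≤ S1 := by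
      calc (1:ℝ) = ∑ w ∈ W, q w := hqsum.symm
        _ ≤ S1 := Finset.sum_le_sum fun w _ => le_mul_of_one_le_right (hq0 w) (hpow1 w)
    have hS1pos : 0 < S1 := lt_of_lt_of_le one_pos hS1ge
    have hSαpos : 0 < Sα := by
      obtain ⟨w, hw, hqw⟩ : ∃ w ∈ W, 0 < q w := by
        by_contra h
        push_neg at h
        have : ∑ w ∈ W, q w = 0 :=
          Finset.sum_eq_zero fun w hw => le_antisymm (h w hw) (hq0 w)
        rw [hqsum] at this; norm_num at this
      exact Finset.sum_pos' (fun w _ => Real.rpow_nonneg (hq0 w) α)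
        ⟨w, hw, Real.rpow_pos_of_pos hqw α⟩
    -- Hölder
    have hpq : Real.HolderConjugate (1 + t) ((1 + t) / t) := by
      rw [Real.holderConjugate_iff]
      constructor
      · linarith
      · field_simp
    have hHolder : Sα ≤ S1 ^ α := by
      have hK := kraft_ineq W hprefix
      have h2 : (0:ℝ) ≤ 2 := by norm_num
      have hKnn : (0:ℝ) ≤ ∑ w ∈ W, (2:ℝ) ^ (-(w.length:ℝ)) :=
        Finset.sum_nonneg fun w _ => Real.rpow_nonneg h2 _
      have key : Sα ≤ S1 ^ α * (∑ w ∈ W, (2:ℝ) ^ (-(w.length:ℝ))) ^ (t / (1 + t)) := by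
        have hHo := Real.inner_le_Lp_mul_Lq_of_nonneg (s := W)
          (f := fun w => (q w * (2:ℝ) ^ (t * (w.length:ℝ))) ^ α)
          (g := fun w => (2:ℝ) ^ (-(w.length:ℝ) * (t / (1 + t)))) hpq
          (fun w _ => Real.rpow_nonneg (mul_nonneg (hq0 w) (Real.rpow_nonneg h2 _)) α)
          (fun w _ => Real.rpow_nonneg h2 _)
        have e1 : ∀ w ∈ W, (q w * (2:ℝ) ^ (t * (w.length:ℝ))) ^ α
            * (2:ℝ) ^ (-(w.length:ℝ) * (t / (1 + t))) = (q w) ^ α := by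
          intro w _
          rw [Real.mul_rpow (hq0 w) (Real.rpow_nonneg h2 _), ← Real.rpow_mul h2,
            mul_assoc, ← Real.rpow_add (by norm_num : (0:ℝ) < 2)]
          rw [show t * (w.length:ℝ) * α + -(w.length:ℝ) * (t / (1 + t)) = 0 by
            rw [hαdef]; field_simp; ring]
          rw [Real.rpow_zero, mul_one]
        have e2 : ∀ w ∈ W, ((q w * (2:ℝ) ^ (t * (w.length:ℝ))) ^ α) ^ (1 + t)
            = q w * (2:ℝ) ^ (t * (w.length:ℝ)) := by
          intro w _
          rw [← Real.rpow_mul (mul_nonneg (hq0 w) (Real.rpow_nonneg h2 _)),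
            hαdef, one_div, inv_mul_cancel₀ (ne_of_gt h1t), Real.rpow_one]
        have e3 : ∀ w ∈ W, ((2:ℝ) ^ (-(w.length:ℝ) * (t / (1 + t)))) ^ ((1 + t) / t)
            = (2:ℝ) ^ (-(w.length:ℝ)) := by
          intro w _
          rw [← Real.rpow_mul h2]
          congr 1
          field_simp
        rw [Finset.sum_congr rfl e1, Finset.sum_congr rfl e2, Finset.sum_congr rfl e3,
          one_div_div] at hHo
        rw [hSαdef, hS1def, hαdef]
        exact hHo
      calc Sα ≤ S1 ^ α * (∑ w ∈ W, (2:ℝ) ^ (-(w.length:ℝ))) ^ (t / (1 + t)) := key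
        _ ≤ S1 ^ α * 1 := by
            apply mul_le_mul_of_nonneg_left _ (Real.rpow_nonneg (le_of_lt hS1pos) α)
            exact Real.rpow_le_one hKnn hK (by positivity)
        _ = S1 ^ α := mul_one _
    -- conclude via logs
    have hlog : Real.logb 2 Sα ≤ α * Real.logb 2 S1 := by
      calc Real.logb 2 Sα ≤ Real.logb 2 (S1 ^ α) :=
            Real.logb_le_logb_of_le (by norm_num) hSαpos hHolder
        _ = α * Real.logb 2 S1 := Real.logb_rpow_eq_mul_logb_of_pos hS1pos
    have h1 : ((1 + t) / t) * Real.logb 2 Sα ≤ ((1 + t) / t) * (α * Real.logb 2 S1) :=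
      mul_le_mul_of_nonneg_left hlog (by positivity)
    have h2 : ((1 + t) / t) * (α * Real.logb 2 S1) = (1 / t) * Real.logb 2 S1 := by
      rw [hαdef]; field_simp
    exact h1.trans (le_of_eq h2)
end
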